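/- arXiv:1704.00604 — 3 statements merged into one kernel-verified Lean document; each statement's English description precedes it below -/
import Mathlib

section
/- There exists C > 0, depending only on N, s and c, such that for every R > 0, every θ ∈ (0,1), every u ∈ L²(ℝ^N), and every η_R : ℝ^N → [0,1] with η_R = 0 on B_R, η_R = 1 on ℝ^N ∖ B_{2R}, and |η_R(x) − η_R(y)| ≤ (c/R)|x − y| for all x, y: ∬_{B_{2R}×ℝ^N} u(x)² |η_R(x) − η_R(y)|² / |x−y|^{N+2s} dx dy ≤ C R^{−2s} ∫_{B_{2R}∖B_{θR}} u² dx + C ((1−θ)R)^{−2s} ∫_{B_{θR}} u² dx. -/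
open MeasureTheory Real Set Filter

noncomputable section

abbrev Euc (N : ℕ) := EuclideanSpace ℝ (Fin N)

/-- Partial derivative of a two-variable real function in the first variable. -/
def pdU (f : ℝ → ℝ → ℝ) (u v : ℝ) : ℝ := deriv (fun t => f t v) u

/-- Partial derivative of a two-variable real function in the second variable. -/
def pdV (f : ℝ → ℝ → ℝ) (u v : ℝ) : ℝ := deriv (fun t => f u t) v

/-- Integrand of the Gagliardo seminorm. -/
def gagKer (N : ℕ) (s : ℝ) (u : Euc N → ℝ) (z : Euc N × Euc N) : ℝ :=
  (u z.1 - u z.2) ^ 2 / ‖z.1 - z.2‖ ^ ((N : ℝ) + 2 * s)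

/-- Squared Gagliardo seminorm `[u]²`. -/
def gagSq (N : ℕ) (s : ℝ) (u : Euc N → ℝ) : ℝ := ∫ z, gagKer N s u z

/-- Membership in the fractional Sobolev space `H^s(ℝ^N)`. -/
def MemHs (N : ℕ) (s : ℝ) (u : Euc N → ℝ) : Prop :=
  MemLp u 2 (volume : Measure (Euc N)) ∧ Integrable (gagKer N s u)

/-- The nonlinearity `Q` together with assumptions (Q1)-(Q6); `Q` is `C²` on the closed
first quadrant and extended by `0` outside of it.  Its partial derivatives are `pdU Q`,
`pdV Q`. -/
structure QSetup (p : ℝ) : Type where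
  Q : ℝ → ℝ → ℝ
  smooth : ContDiffOn ℝ 2 (fun z : ℝ × ℝ => Q z.1 z.2) (Ici 0 ×ˢ Ici 0)
  ext_zero : ∀ u v : ℝ, u ≤ 0 ∨ v ≤ 0 → Q u v = 0
  q1 : ∀ t : ℝ, 0 < t → ∀ u v : ℝ, 0 ≤ u → 0 ≤ v → Q (t * u) (t * v) = t ^ p * Q u v
  q2 : ∃ C : ℝ, 0 < C ∧ ∀ u v : ℝ, 0 ≤ u → 0 ≤ v →
        |pdU Q u v| + |pdV Q u v| ≤ C * (u ^ (p - 1) + v ^ (p - 1))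
  q3 : pdU Q 0 1 = 0 ∧ pdV Q 1 0 = 0
  q4 : pdU Q 1 0 = 0 ∧ pdV Q 0 1 = 0
  q5 : ∀ u v : ℝ, 0 < u → 0 < v → 0 < Q u v
  q6 : ∀ u v : ℝ, 0 ≤ u → 0 ≤ v → 0 ≤ pdU Q u v ∧ 0 ≤ pdV Q u v

/-- The potentials `V`, `W`, the set `Λ`, the point `x₀` and `ρ₀`, with (H1)-(H3). -/
structure PotSetup (N : ℕ) : Type where
  V : Euc N → ℝ
  W : Euc N → ℝ
  Λ : Set (Euc N)
  x₀ : Euc N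
  ρ₀ : ℝ
  contV : Continuous V
  contW : Continuous W
  openΛ : IsOpen Λ
  bddΛ : Bornology.IsBounded Λ
  x₀mem : x₀ ∈ Λ
  ρ₀pos : 0 < ρ₀
  h1 : ∀ x ∈ frontier Λ, ρ₀ ≤ V x ∧ ρ₀ ≤ W x
  h2 : V x₀ < ρ₀ ∧ W x₀ < ρ₀
  h3 : (∀ x, V x₀ ≤ V x) ∧ (∀ x, W x₀ ≤ W x) ∧ 0 < V x₀ ∧ 0 < W x₀

/-- `‖(u,v)‖²_ξ` for the autonomous problem with frozen potentials `V(ξ)`, `W(ξ)`. -/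
def normSqXi {N : ℕ} (s : ℝ) (P : PotSetup N) (ξ : Euc N) (u v : Euc N → ℝ) : ℝ :=
  gagSq N s u + gagSq N s v + ∫ x, (P.V ξ * u x ^ 2 + P.W ξ * v x ^ 2)

/-- The autonomous energy functional `J_ξ`. -/
def Jxi {N : ℕ} (s : ℝ) {p : ℝ} (QS : QSetup p) (P : PotSetup N) (ξ : Euc N)
    (u v : Euc N → ℝ) : ℝ :=
  (1 / 2) * normSqXi s P ξ u v - ∫ x, QS.Q (u x) (v x)

/-- The Nehari manifold `N_ξ` of the autonomous functional `J_ξ`. -/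
def NehariXi {N : ℕ} (s : ℝ) {p : ℝ} (QS : QSetup p) (P : PotSetup N) (ξ : Euc N) :
    Set ((Euc N → ℝ) × (Euc N → ℝ)) :=
  {w | MemHs N s w.1 ∧ MemHs N s w.2 ∧ w ≠ (0, 0) ∧
    normSqXi s P ξ w.1 w.2 =
      ∫ x, (w.1 x * pdU QS.Q (w.1 x) (w.2 x) + w.2 x * pdV QS.Q (w.1 x) (w.2 x))}

/-- `C(ξ) = inf_{(u,v) ∈ N_ξ} J_ξ(u,v)`. -/
def Cmin {N : ℕ} (s : ℝ) {p : ℝ} (QS : QSetup p) (P : PotSetup N) (ξ : Euc N) : ℝ :=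
  sInf ((fun w : (Euc N → ℝ) × (Euc N → ℝ) => Jxi s QS P ξ w.1 w.2) '' NehariXi s QS P ξ)

/-- The cut-off function `η` used in the penalization, for a given `a > 0`. -/
structure EtaSetup (a cη : ℝ) : Type where
  η : ℝ → ℝ
  smooth : ContDiff ℝ 2 η
  anti : Antitone η
  mem01 : ∀ t, η t ∈ Icc (0 : ℝ) 1
  eq_one : ∀ t, t ≤ a → η t = 1
  eq_zero : ∀ t, 5 * a ≤ t → η t = 0
  bd1 : ∀ t, |deriv η t| ≤ cη / a
  bd2 : ∀ t, |deriv (deriv η) t| ≤ cη / a ^ 2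

/-- `A = max { Q(u,v)/(u²+v²) : a ≤ √(u²+v²) ≤ 5a }`. -/
def Aconst {p : ℝ} (QS : QSetup p) (a : ℝ) : ℝ :=
  sSup ((fun z : ℝ × ℝ => QS.Q z.1 z.2 / (z.1 ^ 2 + z.2 ^ 2)) ''
    {z : ℝ × ℝ | a ≤ Real.sqrt (z.1 ^ 2 + z.2 ^ 2) ∧ Real.sqrt (z.1 ^ 2 + z.2 ^ 2) ≤ 5 * a})

/-- The penalized nonlinearity `Q̂`. -/
def Qhat {p : ℝ} (QS : QSetup p) (η : ℝ → ℝ) (A u v : ℝ) : ℝ :=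
  η (Real.sqrt (u ^ 2 + v ^ 2)) * QS.Q u v +
    (1 - η (Real.sqrt (u ^ 2 + v ^ 2))) * (A * (u ^ 2 + v ^ 2))

/-- The penalized function `H(x,u,v) = χ_Λ(x) Q(u,v) + (1-χ_Λ(x)) Q̂(u,v)`. -/
def Hpen {N : ℕ} {p : ℝ} (QS : QSetup p) (η : ℝ → ℝ) (A : ℝ) (Λ : Set (Euc N))
    (x : Euc N) (u v : ℝ) : ℝ :=
  Λ.indicator (fun _ => (1 : ℝ)) x * QS.Q u v +
    (1 - Λ.indicator (fun _ => (1 : ℝ)) x) * Qhat QS η A u v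

/-- `H_u`. -/
def HpenU {N : ℕ} {p : ℝ} (QS : QSetup p) (η : ℝ → ℝ) (A : ℝ) (Λ : Set (Euc N))
    (x : Euc N) (u v : ℝ) : ℝ := pdU (Hpen QS η A Λ x) u v

/-- `H_v`. -/
def HpenV {N : ℕ} {p : ℝ} (QS : QSetup p) (η : ℝ → ℝ) (A : ℝ) (Λ : Set (Euc N))
    (x : Euc N) (u v : ℝ) : ℝ := pdV (Hpen QS η A Λ x) u v

/-- `H_uu`. -/
def HpenUU {N : ℕ} {p : ℝ} (QS : QSetup p) (η : ℝ → ℝ) (A : ℝ) (Λ : Set (Euc N))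
    (x : Euc N) (u v : ℝ) : ℝ := pdU (HpenU QS η A Λ x) u v

/-- `H_uv`. -/
def HpenUV {N : ℕ} {p : ℝ} (QS : QSetup p) (η : ℝ → ℝ) (A : ℝ) (Λ : Set (Euc N))
    (x : Euc N) (u v : ℝ) : ℝ := pdV (HpenU QS η A Λ x) u v

/-- `H_vv`. -/
def HpenVV {N : ℕ} {p : ℝ} (QS : QSetup p) (η : ℝ → ℝ) (A : ℝ) (Λ : Set (Euc N))
    (x : Euc N) (u v : ℝ) : ℝ := pdV (HpenV QS η A Λ x) u v

/-- `‖(u,v)‖²_ε`. -/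
def normSqE {N : ℕ} (s : ℝ) (P : PotSetup N) (ε : ℝ) (u v : Euc N → ℝ) : ℝ :=
  gagSq N s u + gagSq N s v + ∫ x, (P.V (ε • x) * u x ^ 2 + P.W (ε • x) * v x ^ 2)

/-- Membership in the space `X_ε`. -/
def MemXe {N : ℕ} (s : ℝ) (P : PotSetup N) (ε : ℝ) (u v : Euc N → ℝ) : Prop :=
  MemHs N s u ∧ MemHs N s v ∧
    Integrable (fun x => P.V (ε • x) * u x ^ 2 + P.W (ε • x) * v x ^ 2)

/-- The penalized energy functional `J_ε`. -/
def Je {N : ℕ} (s : ℝ) {p : ℝ} (QS : QSetup p) (η : ℝ → ℝ) (A : ℝ) (P : PotSetup N)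
    (ε : ℝ) (u v : Euc N → ℝ) : ℝ :=
  (1 / 2) * normSqE s P ε u v - ∫ x, Hpen QS η A P.Λ (ε • x) (u x) (v x)

/-- The pairing `⟨J'_ε(u,v),(φ,ψ)⟩`. -/
def pairJe {N : ℕ} (s : ℝ) {p : ℝ} (QS : QSetup p) (η : ℝ → ℝ) (A : ℝ) (P : PotSetup N)
    (ε : ℝ) (u v φ ψ : Euc N → ℝ) : ℝ :=
  (∫ z : Euc N × Euc N, (u z.1 - u z.2) * (φ z.1 - φ z.2) / ‖z.1 - z.2‖ ^ ((N : ℝ) + 2 * s)) +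
  (∫ z : Euc N × Euc N, (v z.1 - v z.2) * (ψ z.1 - ψ z.2) / ‖z.1 - z.2‖ ^ ((N : ℝ) + 2 * s)) +
  (∫ x, (P.V (ε • x) * u x * φ x + P.W (ε • x) * v x * ψ x)) -
  (∫ x, (φ x * HpenU QS η A P.Λ (ε • x) (u x) (v x) +
         ψ x * HpenV QS η A P.Λ (ε • x) (u x) (v x)))

/-- The Nehari manifold `N_ε` of the penalized functional `J_ε`. -/
def NehariE {N : ℕ} (s : ℝ) {p : ℝ} (QS : QSetup p) (η : ℝ → ℝ) (A : ℝ) (P : PotSetup N)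
    (ε : ℝ) : Set ((Euc N → ℝ) × (Euc N → ℝ)) :=
  {w | MemXe s P ε w.1 w.2 ∧ w ≠ (0, 0) ∧
    normSqE s P ε w.1 w.2 =
      ∫ x, (w.1 x * HpenU QS η A P.Λ (ε • x) (w.1 x) (w.2 x) +
            w.2 x * HpenV QS η A P.Λ (ε • x) (w.1 x) (w.2 x))}

end

section AuxStmt11
open Metric

variable {N : ℕ}

variable {N : ℕ}

lemma vol_ball (hN : 0 < N) (r : ℝ) (hr : 0 ≤ r) :
    (volume (ball (0 : Euc N) r)) = ENNReal.ofReal (r ^ N) * volume (ball (0 : Euc N) 1) := by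
  have : Nontrivial (Euc N) := by
    constructor
    refine ⟨0, EuclideanSpace.single ⟨0, hN⟩ 1, ?_⟩
    intro h
    have := congrArg (fun v : Euc N => v ⟨0, hN⟩) h.symm
    simp [EuclideanSpace.single_apply] at this
  rw [Measure.addHaar_ball _ _ hr, finrank_euclideanSpace_fin]

lemma out_bound (hN : 0 < N) (r q : ℝ) (hr : 0 < r) (hq : (N : ℝ) < q) :
    (∫⁻ z in (ball (0 : Euc N) r)ᶜ, ENNReal.ofReal (‖z‖ ^ (-q))) ≤
      ENNReal.ofReal ((volume (ball (0 : Euc N) 1)).toReal * 2 ^ (N : ℝ) *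
        (1 - 2 ^ ((N : ℝ) - q))⁻¹ * r ^ ((N : ℝ) - q)) := by
  set b : ℕ → ℝ := fun k => 2 ^ k * r with hb
  have hbpos : ∀ k, 0 < b k := fun k => by positivity
  set ρ : ℝ := 2 ^ ((N : ℝ) - q) with hρ
  have hρpos : 0 < ρ := by positivity
  have hρlt : ρ < 1 := Real.rpow_lt_one_of_one_lt_of_neg one_lt_two (by linarith)
  -- covering
  have hsub : (ball (0 : Euc N) r)ᶜ ⊆ ⋃ k : ℕ, (ball (0 : Euc N) (b (k+1)) \ ball 0 (b k)) := by
    intro z hz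
    simp only [mem_compl_iff, mem_ball, dist_zero_right, not_lt] at hz
    have hex : ∃ k : ℕ, ‖z‖ < b (k + 1) := by
      obtain ⟨n, hn⟩ := pow_unbounded_of_one_lt (‖z‖ / r) (one_lt_two (α := ℝ))
      refine ⟨n, ?_⟩
      have : ‖z‖ < 2 ^ n * r := by
        rw [div_lt_iff₀ hr] at hn; linarith
      have h2 : (2:ℝ) ^ n * r ≤ 2 ^ (n+1) * r := by
        have : (2:ℝ) ^ n ≤ 2 ^ (n+1) := pow_le_pow_right₀ one_le_two (Nat.le_succ n)
        nlinarith
      exact lt_of_lt_of_le this h2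
    let k0 := Nat.find hex
    refine mem_iUnion.2 ⟨k0, ?_, ?_⟩
    · simpa [mem_ball, dist_zero_right] using Nat.find_spec hex
    · simp only [mem_ball, dist_zero_right, not_lt]
      rcases Nat.eq_zero_or_pos k0 with h0 | h0
      · simpa [hb, h0] using hz
      · obtain ⟨j, hj⟩ := Nat.exists_eq_succ_of_ne_zero h0.ne'
        have := Nat.find_min hex (m := j) (by omega)
        rw [hj]
        simpa using this
  -- per-term key identity
  have hqpos : 0 < q := lt_of_le_of_lt (Nat.cast_nonneg N) hq
  have key2 : ∀ k : ℕ, (b k) ^ ((N : ℝ) - q) = r ^ ((N : ℝ) - q) * ρ ^ k := by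
    intro k
    induction k with
    | zero =>
      have h0 : b 0 = r := by simp [hb]
      rw [h0, pow_zero, mul_one]
    | succ k ih =>
      have h1 : b (k+1) = 2 * b k := by simp [hb, pow_succ]; ring
      rw [h1, Real.mul_rpow (by norm_num) (hbpos k).le, ih, ← hρ, pow_succ]
      ring
  have key : ∀ k : ℕ, (b k) ^ (-q) * (b (k+1)) ^ (N : ℕ) =
      2 ^ (N : ℝ) * r ^ ((N : ℝ) - q) * ρ ^ k := by
    intro k
    have h1 : b (k+1) = 2 * b k := by simp [hb, pow_succ]; ring
    rw [h1, mul_pow, ← Real.rpow_natCast (b k) N, ← Real.rpow_natCast (2:ℝ) N]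
    rw [show (b k) ^ (-q) * ((2:ℝ) ^ ((N:ℕ):ℝ) * b k ^ ((N:ℕ):ℝ)) =
      (2:ℝ) ^ ((N:ℕ):ℝ) * (b k ^ (-q) * b k ^ ((N:ℕ):ℝ)) from by ring]
    rw [← Real.rpow_add (hbpos k), show -q + ((N:ℕ):ℝ) = (N:ℝ) - q from by push_cast; ring,
      key2 k]
    ring
  -- per-term bound
  have hterm : ∀ k : ℕ, (∫⁻ z in (ball (0 : Euc N) (b (k+1)) \ ball 0 (b k)),
      ENNReal.ofReal (‖z‖ ^ (-q))) ≤
      ENNReal.ofReal (2 ^ (N : ℝ) * r ^ ((N : ℝ) - q)) * ENNReal.ofReal ρ ^ k *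
        volume (ball (0 : Euc N) 1) := by
    intro k
    calc (∫⁻ z in (ball (0 : Euc N) (b (k+1)) \ ball 0 (b k)), ENNReal.ofReal (‖z‖ ^ (-q)))
        ≤ ∫⁻ _ in (ball (0 : Euc N) (b (k+1)) \ ball 0 (b k)),
            ENNReal.ofReal ((b k) ^ (-q)) := by
          refine setLIntegral_mono measurable_const fun z hz => ?_
          have : b k ≤ ‖z‖ := by
            have := hz.2; simp only [mem_ball, dist_zero_right, not_lt] at this; exact this
          exact ENNReal.ofReal_le_ofReal
            (Real.rpow_le_rpow_of_nonpos (hbpos k) this (by linarith))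
      _ = ENNReal.ofReal ((b k) ^ (-q)) * volume (ball (0 : Euc N) (b (k+1)) \ ball 0 (b k)) :=
          setLIntegral_const _ _
      _ ≤ ENNReal.ofReal ((b k) ^ (-q)) * volume (ball (0 : Euc N) (b (k+1))) :=
          mul_le_mul_right (measure_mono diff_subset) _
      _ = ENNReal.ofReal ((b k) ^ (-q)) * (ENNReal.ofReal ((b (k+1)) ^ (N:ℕ)) *
            volume (ball (0 : Euc N) 1)) := by rw [vol_ball hN _ (hbpos (k+1)).le]
      _ = ENNReal.ofReal ((b k) ^ (-q) * (b (k+1)) ^ (N:ℕ)) * volume (ball (0 : Euc N) 1) := by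
          rw [ENNReal.ofReal_mul (Real.rpow_nonneg (hbpos k).le _)]; ring
      _ = ENNReal.ofReal (2 ^ (N : ℝ) * r ^ ((N : ℝ) - q)) * ENNReal.ofReal ρ ^ k *
            volume (ball (0 : Euc N) 1) := by
          rw [key k, ENNReal.ofReal_mul (by positivity), ENNReal.ofReal_pow hρpos.le]
  calc (∫⁻ z in (ball (0 : Euc N) r)ᶜ, ENNReal.ofReal (‖z‖ ^ (-q)))
      ≤ ∫⁻ z in ⋃ k : ℕ, (ball (0 : Euc N) (b (k+1)) \ ball 0 (b k)),
          ENNReal.ofReal (‖z‖ ^ (-q)) := lintegral_mono_set hsub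
    _ ≤ ∑' k : ℕ, ∫⁻ z in (ball (0 : Euc N) (b (k+1)) \ ball 0 (b k)),
          ENNReal.ofReal (‖z‖ ^ (-q)) := lintegral_iUnion_le _ _
    _ ≤ ∑' k : ℕ, ENNReal.ofReal (2 ^ (N : ℝ) * r ^ ((N : ℝ) - q)) * ENNReal.ofReal ρ ^ k *
          volume (ball (0 : Euc N) 1) := ENNReal.tsum_le_tsum hterm
    _ = ENNReal.ofReal (2 ^ (N : ℝ) * r ^ ((N : ℝ) - q)) * volume (ball (0 : Euc N) 1) *
          ∑' k : ℕ, ENNReal.ofReal ρ ^ k := by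
        rw [← ENNReal.tsum_mul_left]
        congr 1; ext k; ring
    _ = ENNReal.ofReal (2 ^ (N : ℝ) * r ^ ((N : ℝ) - q)) * volume (ball (0 : Euc N) 1) *
          ENNReal.ofReal ((1 - ρ)⁻¹) := by
        rw [ENNReal.tsum_geometric, ENNReal.ofReal_inv_of_pos (by linarith),
          ENNReal.ofReal_sub _ hρpos.le, ENNReal.ofReal_one]
    _ = ENNReal.ofReal ((volume (ball (0 : Euc N) 1)).toReal * 2 ^ (N : ℝ) *
        (1 - 2 ^ ((N : ℝ) - q))⁻¹ * r ^ ((N : ℝ) - q)) := by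
        have hμ : volume (ball (0 : Euc N) 1) =
            ENNReal.ofReal ((volume (ball (0 : Euc N) 1)).toReal) :=
          (ENNReal.ofReal_toReal (measure_ball_lt_top (x := (0:Euc N)) (r := 1)).ne).symm
        conv_lhs => rw [hμ]
        rw [← ENNReal.ofReal_mul (by positivity), ← ENNReal.ofReal_mul (by positivity)]
        congr 1
        ring

lemma in_bound (hN : 0 < N) (r q : ℝ) (hr : 0 < r) (hq0 : 0 < q) (hq2 : q < (N : ℝ) + 2) :
    (∫⁻ z in ball (0 : Euc N) r, ENNReal.ofReal (‖z‖ ^ 2 / ‖z‖ ^ q)) ≤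
      ENNReal.ofReal ((volume (ball (0 : Euc N) 1)).toReal * 2 ^ q *
        (1 - 2 ^ (q - (N : ℝ) - 2))⁻¹ * r ^ ((N : ℝ) + 2 - q)) := by
  have hnt : Nontrivial (Euc N) := by
    constructor
    refine ⟨0, EuclideanSpace.single ⟨0, hN⟩ 1, ?_⟩
    intro h
    have := congrArg (fun v : Euc N => v ⟨0, hN⟩) h.symm
    simp [EuclideanSpace.single_apply] at this
  set b : ℕ → ℝ := fun k => (2⁻¹ : ℝ) ^ k * r with hb
  have hbpos : ∀ k, 0 < b k := fun k => by positivity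
  have hbsucc : ∀ k, b (k+1) = b k * 2⁻¹ := fun k => by simp [hb, pow_succ]; ring
  set ρ : ℝ := 2 ^ (q - (N : ℝ) - 2) with hρ
  have hρpos : 0 < ρ := by positivity
  have hρlt : ρ < 1 := Real.rpow_lt_one_of_one_lt_of_neg one_lt_two (by linarith)
  have hinv : (2⁻¹ : ℝ) ^ ((N : ℝ) + 2 - q) = ρ := by
    rw [Real.inv_rpow (by norm_num), ← Real.rpow_neg (by norm_num), hρ]
    ring_nf
  -- covering
  have hsub : ball (0 : Euc N) r ⊆
      {(0 : Euc N)} ∪ ⋃ k : ℕ, (closedBall (0 : Euc N) (b k) \ ball 0 (b (k+1))) := by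
    intro z hz
    simp only [mem_ball, dist_zero_right] at hz
    rcases eq_or_ne z 0 with h0 | h0
    · exact Or.inl (by simp [h0])
    have hzpos : 0 < ‖z‖ := norm_pos_iff.2 h0
    have hex : ∃ k : ℕ, b (k + 1) < ‖z‖ := by
      obtain ⟨n, hn⟩ := exists_pow_lt_of_lt_one (div_pos hzpos hr) (by norm_num : (2⁻¹:ℝ) < 1)
      have h1 : b n < ‖z‖ := by
        have := (lt_div_iff₀ hr).1 hn
        simpa [hb] using this
      exact ⟨n, by nlinarith [hbpos n, hbsucc n]⟩
    refine Or.inr (mem_iUnion.2 ⟨Nat.find hex, ?_, ?_⟩)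
    · simp only [mem_closedBall, dist_zero_right]
      rcases Nat.eq_zero_or_pos (Nat.find hex) with h0' | h0'
      · rw [h0']; simpa [hb] using hz.le
      · obtain ⟨j, hj⟩ := Nat.exists_eq_succ_of_ne_zero h0'.ne'
        have := Nat.find_min hex (m := j) (by omega)
        rw [hj]; simpa [Nat.succ_eq_add_one] using not_lt.1 this
    · simp only [mem_ball, dist_zero_right, not_lt]
      exact (Nat.find_spec hex).le
  have hqpos : 0 < q := hq0
  have key2 : ∀ k : ℕ, (b k) ^ ((N : ℝ) + 2 - q) = r ^ ((N : ℝ) + 2 - q) * ρ ^ k := by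
    intro k
    induction k with
    | zero =>
      have h0 : b 0 = r := by simp [hb]
      rw [h0, pow_zero, mul_one]
    | succ k ih =>
      rw [hbsucc k, Real.mul_rpow (hbpos k).le (by norm_num), ih, hinv, pow_succ]
      ring
  have key : ∀ k : ℕ, (b k) ^ (2:ℕ) * (b (k+1)) ^ (-q) * (b k) ^ (N : ℕ) =
      2 ^ q * r ^ ((N : ℝ) + 2 - q) * ρ ^ k := by
    intro k
    have h1 : (b (k+1)) ^ (-q) = (b k) ^ (-q) * 2 ^ q := by
      rw [hbsucc k, Real.mul_rpow (hbpos k).le (by norm_num),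
        Real.inv_rpow (by norm_num : (0:ℝ) ≤ 2), ← Real.rpow_neg (by norm_num : (0:ℝ) ≤ 2),
        neg_neg]
    rw [h1, ← Real.rpow_natCast (b k) 2, ← Real.rpow_natCast (b k) N]
    rw [show (b k) ^ ((2:ℕ):ℝ) * ((b k) ^ (-q) * 2 ^ q) * (b k) ^ ((N:ℕ):ℝ) =
      2 ^ q * ((b k) ^ ((2:ℕ):ℝ) * (b k) ^ (-q) * (b k) ^ ((N:ℕ):ℝ)) from by ring]
    rw [← Real.rpow_add (hbpos k), ← Real.rpow_add (hbpos k),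
      show ((2:ℕ):ℝ) + -q + ((N:ℕ):ℝ) = (N:ℝ) + 2 - q from by push_cast; ring, key2 k]
    ring
  -- per-term bound
  have hterm : ∀ k : ℕ, (∫⁻ z in (closedBall (0 : Euc N) (b k) \ ball 0 (b (k+1))),
      ENNReal.ofReal (‖z‖ ^ 2 / ‖z‖ ^ q)) ≤
      ENNReal.ofReal (2 ^ q * r ^ ((N : ℝ) + 2 - q)) * ENNReal.ofReal ρ ^ k *
        volume (ball (0 : Euc N) 1) := by
    intro k
    calc (∫⁻ z in (closedBall (0 : Euc N) (b k) \ ball 0 (b (k+1))),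
        ENNReal.ofReal (‖z‖ ^ 2 / ‖z‖ ^ q))
        ≤ ∫⁻ _ in (closedBall (0 : Euc N) (b k) \ ball 0 (b (k+1))),
            ENNReal.ofReal ((b k) ^ (2:ℕ) * (b (k+1)) ^ (-q)) := by
          refine setLIntegral_mono measurable_const fun z hz => ?_
          have hle : ‖z‖ ≤ b k := by
            have := hz.1; simpa [mem_closedBall, dist_zero_right] using this
          have hge : b (k+1) ≤ ‖z‖ := by
            have := hz.2; simp only [mem_ball, dist_zero_right, not_lt] at this; exact this
          have hzpos : 0 < ‖z‖ := lt_of_lt_of_le (hbpos (k+1)) hge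
          refine ENNReal.ofReal_le_ofReal ?_
          rw [div_eq_mul_inv, ← Real.rpow_neg (norm_nonneg z)]
          exact mul_le_mul (pow_le_pow_left₀ (norm_nonneg z) hle 2)
            (Real.rpow_le_rpow_of_nonpos (hbpos (k+1)) hge (by linarith))
            (Real.rpow_nonneg (norm_nonneg z) _) (by positivity)
      _ = ENNReal.ofReal ((b k) ^ (2:ℕ) * (b (k+1)) ^ (-q)) *
            volume (closedBall (0 : Euc N) (b k) \ ball 0 (b (k+1))) := setLIntegral_const _ _
      _ ≤ ENNReal.ofReal ((b k) ^ (2:ℕ) * (b (k+1)) ^ (-q)) *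
            volume (closedBall (0 : Euc N) (b k)) := mul_le_mul_right (measure_mono diff_subset) _
      _ = ENNReal.ofReal ((b k) ^ (2:ℕ) * (b (k+1)) ^ (-q)) * (ENNReal.ofReal ((b k) ^ (N:ℕ)) *
            volume (ball (0 : Euc N) 1)) := by
          rw [Measure.addHaar_closedBall _ _ (hbpos k).le, finrank_euclideanSpace_fin]
      _ = ENNReal.ofReal ((b k) ^ (2:ℕ) * (b (k+1)) ^ (-q) * (b k) ^ (N:ℕ)) *
            volume (ball (0 : Euc N) 1) := by
          rw [ENNReal.ofReal_mul (by positivity), ENNReal.ofReal_mul (by positivity),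
            ENNReal.ofReal_mul (by positivity)]
          simp [mul_assoc]
      _ = ENNReal.ofReal (2 ^ q * r ^ ((N : ℝ) + 2 - q)) * ENNReal.ofReal ρ ^ k *
            volume (ball (0 : Euc N) 1) := by
          rw [key k, ENNReal.ofReal_mul (by positivity), ENNReal.ofReal_pow hρpos.le]
  calc (∫⁻ z in ball (0 : Euc N) r, ENNReal.ofReal (‖z‖ ^ 2 / ‖z‖ ^ q))
      ≤ ∫⁻ z in {(0 : Euc N)} ∪ ⋃ k : ℕ, (closedBall (0 : Euc N) (b k) \ ball 0 (b (k+1))),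
          ENNReal.ofReal (‖z‖ ^ 2 / ‖z‖ ^ q) := lintegral_mono_set hsub
    _ ≤ (∫⁻ z in {(0 : Euc N)}, ENNReal.ofReal (‖z‖ ^ 2 / ‖z‖ ^ q)) +
        ∫⁻ z in ⋃ k : ℕ, (closedBall (0 : Euc N) (b k) \ ball 0 (b (k+1))),
          ENNReal.ofReal (‖z‖ ^ 2 / ‖z‖ ^ q) := lintegral_union_le _ _ _
    _ = ∫⁻ z in ⋃ k : ℕ, (closedBall (0 : Euc N) (b k) \ ball 0 (b (k+1))),
          ENNReal.ofReal (‖z‖ ^ 2 / ‖z‖ ^ q) := by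
        rw [setLIntegral_measure_zero _ _ (measure_singleton _), zero_add]
    _ ≤ ∑' k : ℕ, ∫⁻ z in (closedBall (0 : Euc N) (b k) \ ball 0 (b (k+1))),
          ENNReal.ofReal (‖z‖ ^ 2 / ‖z‖ ^ q) := lintegral_iUnion_le _ _
    _ ≤ ∑' k : ℕ, ENNReal.ofReal (2 ^ q * r ^ ((N : ℝ) + 2 - q)) * ENNReal.ofReal ρ ^ k *
          volume (ball (0 : Euc N) 1) := ENNReal.tsum_le_tsum hterm
    _ = ENNReal.ofReal (2 ^ q * r ^ ((N : ℝ) + 2 - q)) * volume (ball (0 : Euc N) 1) *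
          ∑' k : ℕ, ENNReal.ofReal ρ ^ k := by
        rw [← ENNReal.tsum_mul_left]
        congr 1; ext k; ring
    _ = ENNReal.ofReal (2 ^ q * r ^ ((N : ℝ) + 2 - q)) * volume (ball (0 : Euc N) 1) *
          ENNReal.ofReal ((1 - ρ)⁻¹) := by
        rw [ENNReal.tsum_geometric, ENNReal.ofReal_inv_of_pos (by linarith),
          ENNReal.ofReal_sub _ hρpos.le, ENNReal.ofReal_one]
    _ = ENNReal.ofReal ((volume (ball (0 : Euc N) 1)).toReal * 2 ^ q *
        (1 - 2 ^ (q - (N : ℝ) - 2))⁻¹ * r ^ ((N : ℝ) + 2 - q)) := by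
        have hμ : volume (ball (0 : Euc N) 1) =
            ENNReal.ofReal ((volume (ball (0 : Euc N) 1)).toReal) :=
          (ENNReal.ofReal_toReal (measure_ball_lt_top (x := (0:Euc N)) (r := 1)).ne).symm
        conv_lhs => rw [hμ]
        rw [← ENNReal.ofReal_mul (by positivity), ← ENNReal.ofReal_mul (by positivity)]
        congr 1
        ring

noncomputable def Kout (N : ℕ) (q : ℝ) : ℝ :=
  (volume (ball (0 : Euc N) 1)).toReal * 2 ^ (N : ℝ) * (1 - 2 ^ ((N : ℝ) - q))⁻¹

noncomputable def Kin (N : ℕ) (q : ℝ) : ℝ :=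
  (volume (ball (0 : Euc N) 1)).toReal * 2 ^ q * (1 - 2 ^ (q - (N : ℝ) - 2))⁻¹

lemma Kout_nonneg (N : ℕ) (q : ℝ) (hqN : (N : ℝ) < q) : 0 ≤ Kout N q := by
  have h : (2:ℝ) ^ ((N : ℝ) - q) < 1 :=
    Real.rpow_lt_one_of_one_lt_of_neg one_lt_two (by linarith)
  have : (0:ℝ) < (1 - 2 ^ ((N : ℝ) - q))⁻¹ := by
    apply inv_pos.2; linarith
  unfold Kout
  positivity

lemma Kin_nonneg (N : ℕ) (q : ℝ) (hq2 : q < (N : ℝ) + 2) : 0 ≤ Kin N q := by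
  have h : (2:ℝ) ^ (q - (N : ℝ) - 2) < 1 :=
    Real.rpow_lt_one_of_one_lt_of_neg one_lt_two (by linarith)
  have : (0:ℝ) < (1 - 2 ^ (q - (N : ℝ) - 2))⁻¹ := by
    apply inv_pos.2; linarith
  unfold Kin
  positivity

lemma inner1 (hN : 0 < N) (q R cR : ℝ) (hqN : (N : ℝ) < q) (hq2 : q < (N : ℝ) + 2)
    (hR : 0 < R) (hcR : 0 ≤ cR) (η : Euc N → ℝ) (hη01 : ∀ x, η x ∈ Icc (0:ℝ) 1)
    (hlip : ∀ x y : Euc N, |η x - η y| ≤ cR * ‖x - y‖) (x : Euc N) :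
    (∫⁻ y, ENNReal.ofReal ((η x - η y) ^ 2 / ‖x - y‖ ^ q)) ≤
      ENNReal.ofReal (cR ^ 2 * (Kin N q * R ^ ((N : ℝ) + 2 - q)) +
        Kout N q * R ^ ((N : ℝ) - q)) := by
  have hq0 : 0 < q := lt_of_le_of_lt (Nat.cast_nonneg N) hqN
  set G : Euc N → ENNReal := fun z =>
    (ball (0 : Euc N) R).indicator
      (fun z => ENNReal.ofReal (cR ^ 2) * ENNReal.ofReal (‖z‖ ^ 2 / ‖z‖ ^ q)) z +
    ((ball (0 : Euc N) R)ᶜ).indicator (fun z => ENNReal.ofReal (‖z‖ ^ (-q))) z with hG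
  have hm1 : Measurable fun z : Euc N => ENNReal.ofReal (‖z‖ ^ 2 / ‖z‖ ^ q) := by
    apply Measurable.ennreal_ofReal
    exact (measurable_norm.pow_const 2).div (measurable_norm.pow measurable_const)
  have hm2 : Measurable fun z : Euc N => ENNReal.ofReal (‖z‖ ^ (-q)) := by
    apply Measurable.ennreal_ofReal
    exact measurable_norm.pow measurable_const
  have hGm : Measurable G := by
    apply Measurable.add
    · exact (measurable_const.mul hm1).indicator measurableSet_ball
    · exact hm2.indicator measurableSet_ball.compl
  have hpoint : ∀ y : Euc N, ENNReal.ofReal ((η x - η y) ^ 2 / ‖x - y‖ ^ q) ≤ G (x - y) := by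
    intro y
    by_cases hxy : ‖x - y‖ < R
    · have hmem : (x - y) ∈ ball (0 : Euc N) R := mem_ball_zero_iff.2 hxy
      have hne : (x - y) ∉ (ball (0 : Euc N) R)ᶜ := fun h => h hmem
      have hGv : G (x - y) = ENNReal.ofReal (cR ^ 2) *
          ENNReal.ofReal (‖x - y‖ ^ 2 / ‖x - y‖ ^ q) := by
        simp only [hG, Set.indicator_of_mem hmem, Set.indicator_of_notMem hne, add_zero]
      rw [hGv, ← ENNReal.ofReal_mul (by positivity)]
      apply ENNReal.ofReal_le_ofReal
      by_cases h0 : ‖x - y‖ = 0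
      · have h1 : |η x - η y| ≤ 0 := by simpa [h0] using hlip x y
        have h2 : η x - η y = 0 := abs_nonpos_iff.1 h1
        rw [h2, h0]
        norm_num
      · have hpos : 0 < ‖x - y‖ := lt_of_le_of_ne (norm_nonneg _) (Ne.symm h0)
        have hD : 0 < ‖x - y‖ ^ q := Real.rpow_pos_of_pos hpos q
        rw [← mul_div_assoc]
        rw [div_le_div_iff_of_pos_right hD]
        have h3 := hlip x y
        nlinarith [sq_abs (η x - η y), abs_nonneg (η x - η y), norm_nonneg (x - y)]
    · have hmem : (x - y) ∈ (ball (0 : Euc N) R)ᶜ := fun h => hxy (mem_ball_zero_iff.1 h)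
      have hne : (x - y) ∉ ball (0 : Euc N) R := fun h => hxy (mem_ball_zero_iff.1 h)
      have hGv : G (x - y) = ENNReal.ofReal (‖x - y‖ ^ (-q)) := by
        simp only [hG, Set.indicator_of_mem hmem, Set.indicator_of_notMem hne, zero_add]
      rw [hGv]
      apply ENNReal.ofReal_le_ofReal
      have hge : R ≤ ‖x - y‖ := not_lt.1 hxy
      have hpos : 0 < ‖x - y‖ := lt_of_lt_of_le hR hge
      have hD : 0 < ‖x - y‖ ^ q := Real.rpow_pos_of_pos hpos q
      rw [Real.rpow_neg (norm_nonneg _), ← one_div]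
      rw [div_le_div_iff_of_pos_right hD]
      have h1 := hη01 x
      have h2 := hη01 y
      simp only [mem_Icc] at h1 h2
      nlinarith
  calc (∫⁻ y, ENNReal.ofReal ((η x - η y) ^ 2 / ‖x - y‖ ^ q))
      ≤ ∫⁻ y, G (x - y) := lintegral_mono hpoint
    _ = ∫⁻ z, G z := (Measure.measurePreserving_sub_left volume x).lintegral_comp hGm
    _ = (∫⁻ z in ball (0 : Euc N) R, ENNReal.ofReal (cR ^ 2) *
            ENNReal.ofReal (‖z‖ ^ 2 / ‖z‖ ^ q)) +
          ∫⁻ z in (ball (0 : Euc N) R)ᶜ, ENNReal.ofReal (‖z‖ ^ (-q)) := by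
        simp only [hG]
        rw [lintegral_add_left ((hm1.const_mul (ENNReal.ofReal (cR ^ 2))).indicator measurableSet_ball),
          lintegral_indicator measurableSet_ball, lintegral_indicator measurableSet_ball.compl]
    _ = ENNReal.ofReal (cR ^ 2) * (∫⁻ z in ball (0 : Euc N) R,
            ENNReal.ofReal (‖z‖ ^ 2 / ‖z‖ ^ q)) +
          ∫⁻ z in (ball (0 : Euc N) R)ᶜ, ENNReal.ofReal (‖z‖ ^ (-q)) := by
        rw [lintegral_const_mul _ hm1]
    _ ≤ ENNReal.ofReal (cR ^ 2) * ENNReal.ofReal (Kin N q * R ^ ((N : ℝ) + 2 - q)) +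
          ENNReal.ofReal (Kout N q * R ^ ((N : ℝ) - q)) := by
        apply add_le_add
        · apply mul_le_mul_right
          have h := in_bound hN R q hR hq0 hq2
          unfold Kin
          exact h
        · have h := out_bound hN R q hR hqN
          unfold Kout
          exact h
    _ = ENNReal.ofReal (cR ^ 2 * (Kin N q * R ^ ((N : ℝ) + 2 - q)) +
          Kout N q * R ^ ((N : ℝ) - q)) := by
        rw [← ENNReal.ofReal_mul (by positivity), ← ENNReal.ofReal_add]
        · exact mul_nonneg (by positivity)
            (mul_nonneg (Kin_nonneg N q hq2) (Real.rpow_nonneg hR.le _))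
        · exact mul_nonneg (Kout_nonneg N q hqN) (Real.rpow_nonneg hR.le _)

lemma inner2 (hN : 0 < N) (q R θ : ℝ) (hqN : (N : ℝ) < q) (hR : 0 < R)
    (hθ0 : 0 < θ) (hθ1 : θ < 1) (η : Euc N → ℝ) (hη01 : ∀ x, η x ∈ Icc (0:ℝ) 1)
    (hzero : ∀ x ∈ ball (0 : Euc N) R, η x = 0) (x : Euc N)
    (hx : x ∈ ball (0 : Euc N) (θ * R)) :
    (∫⁻ y, ENNReal.ofReal ((η x - η y) ^ 2 / ‖x - y‖ ^ q)) ≤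
      ENNReal.ofReal (Kout N q * ((1 - θ) * R) ^ ((N : ℝ) - q)) := by
  have hq0 : 0 < q := lt_of_le_of_lt (Nat.cast_nonneg N) hqN
  have hr' : 0 < (1 - θ) * R := by nlinarith
  set G : Euc N → ENNReal := fun z =>
    ((ball (0 : Euc N) ((1 - θ) * R))ᶜ).indicator (fun z => ENNReal.ofReal (‖z‖ ^ (-q))) z
    with hG
  have hm2 : Measurable fun z : Euc N => ENNReal.ofReal (‖z‖ ^ (-q)) := by
    apply Measurable.ennreal_ofReal
    exact measurable_norm.pow measurable_const
  have hGm : Measurable G := hm2.indicator measurableSet_ball.compl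
  have hxR : ‖x‖ < θ * R := mem_ball_zero_iff.1 hx
  have hpoint : ∀ y : Euc N, ENNReal.ofReal ((η x - η y) ^ 2 / ‖x - y‖ ^ q) ≤ G (x - y) := by
    intro y
    by_cases hxy : ‖x - y‖ < (1 - θ) * R
    · have hne : (x - y) ∉ (ball (0 : Euc N) ((1 - θ) * R))ᶜ :=
        fun h => h (mem_ball_zero_iff.2 hxy)
      have hGv : G (x - y) = 0 := by
        simp only [hG, Set.indicator_of_notMem hne]
      rw [hGv]
      have hy : ‖y‖ < R := by
        have h1 : ‖y‖ ≤ ‖x‖ + ‖x - y‖ := by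
          have := norm_sub_le x (x - y)
          simpa using this
        nlinarith
      have hex : η x = 0 := hzero x (mem_ball_zero_iff.2 (by nlinarith))
      have hey : η y = 0 := hzero y (mem_ball_zero_iff.2 hy)
      rw [hex, hey]
      simp
    · have hmem : (x - y) ∈ (ball (0 : Euc N) ((1 - θ) * R))ᶜ :=
        fun h => hxy (mem_ball_zero_iff.1 h)
      have hGv : G (x - y) = ENNReal.ofReal (‖x - y‖ ^ (-q)) := by
        simp only [hG, Set.indicator_of_mem hmem]
      rw [hGv]
      apply ENNReal.ofReal_le_ofReal
      have hge : (1 - θ) * R ≤ ‖x - y‖ := not_lt.1 hxy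
      have hpos : 0 < ‖x - y‖ := lt_of_lt_of_le hr' hge
      have hD : 0 < ‖x - y‖ ^ q := Real.rpow_pos_of_pos hpos q
      rw [Real.rpow_neg (norm_nonneg _), ← one_div]
      rw [div_le_div_iff_of_pos_right hD]
      have h1 := hη01 x
      have h2 := hη01 y
      simp only [mem_Icc] at h1 h2
      nlinarith
  calc (∫⁻ y, ENNReal.ofReal ((η x - η y) ^ 2 / ‖x - y‖ ^ q))
      ≤ ∫⁻ y, G (x - y) := lintegral_mono hpoint
    _ = ∫⁻ z, G z := (Measure.measurePreserving_sub_left volume x).lintegral_comp hGm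
    _ = ∫⁻ z in (ball (0 : Euc N) ((1 - θ) * R))ᶜ, ENNReal.ofReal (‖z‖ ^ (-q)) := by
        simp only [hG]
        rw [lintegral_indicator measurableSet_ball.compl]
    _ ≤ ENNReal.ofReal (Kout N q * ((1 - θ) * R) ^ ((N : ℝ) - q)) := by
        have h := out_bound hN ((1 - θ) * R) q hr' hqN
        unfold Kout
        exact h

end AuxStmt11

/-- estimate for the cut-off Gagliardo energy on `B_{2R} × ℝ^N`. -/
theorem stmt11 {N : ℕ} (s : ℝ) (hs : 0 < s ∧ s < 1) (hN : 2 * s < (N : ℝ))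
    (c : ℝ) (hc : 0 < c) :
    ∃ C : ℝ, 0 < C ∧ ∀ R θ : ℝ, 0 < R → 0 < θ → θ < 1 →
      ∀ u : Euc N → ℝ, MemLp u 2 (volume : Measure (Euc N)) →
      ∀ ηR : Euc N → ℝ, (∀ x, ηR x ∈ Icc (0 : ℝ) 1) →
        (∀ x ∈ Metric.ball (0 : Euc N) R, ηR x = 0) →
        (∀ x ∉ Metric.ball (0 : Euc N) (2 * R), ηR x = 1) →
        (∀ x y : Euc N, |ηR x - ηR y| ≤ c / R * ‖x - y‖) →
      (∫⁻ z : Euc N × Euc N in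
          Metric.ball (0 : Euc N) (2 * R) ×ˢ (Set.univ : Set (Euc N)),
          ENNReal.ofReal
            ((u z.1) ^ 2 * (ηR z.1 - ηR z.2) ^ 2 / ‖z.1 - z.2‖ ^ ((N : ℝ) + 2 * s))) ≤
        ENNReal.ofReal (C * R ^ (-(2 * s))) *
          (∫⁻ x in Metric.ball (0 : Euc N) (2 * R) \ Metric.ball (0 : Euc N) (θ * R),
            ENNReal.ofReal ((u x) ^ 2)) +
        ENNReal.ofReal (C * ((1 - θ) * R) ^ (-(2 * s))) *
          (∫⁻ x in Metric.ball (0 : Euc N) (θ * R), ENNReal.ofReal ((u x) ^ 2)) := by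
  obtain ⟨hs0, hs1⟩ := hs
  have hN0 : 0 < N := by
    by_contra h
    have : N = 0 := by omega
    rw [this] at hN; norm_num at hN; linarith
  set q : ℝ := (N : ℝ) + 2 * s with hq
  have hqN : (N : ℝ) < q := by rw [hq]; linarith
  have hq2 : q < (N : ℝ) + 2 := by rw [hq]; linarith
  have hKin := Kin_nonneg N q hq2
  have hKout := Kout_nonneg N q hqN
  refine ⟨c ^ 2 * Kin N q + Kout N q + 1, by positivity, ?_⟩
  set C : ℝ := c ^ 2 * Kin N q + Kout N q + 1 with hC
  intro R θ hR hθ0 hθ1 u hu ηR hη01 hη0 hη1 hηlip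
  -- measurable representative
  have aem := hu.aestronglyMeasurable.aemeasurable
  set g : Euc N → ℝ := aem.mk u with hgdef
  have hg : Measurable g := aem.measurable_mk
  have hae : u =ᵐ[volume] g := aem.ae_eq_mk
  -- measurability of ηR
  have hηm : Measurable ηR := by
    have hlipW : LipschitzWith (Real.toNNReal (c / R)) ηR := by
      apply LipschitzWith.of_dist_le_mul
      intro x y
      rw [Real.dist_eq, dist_eq_norm, Real.coe_toNNReal _ (by positivity)]
      exact hηlip x y
    exact hlipW.continuous.measurable
  -- measurability of the product integrand (with g)
  have hfm : Measurable (fun z : Euc N × Euc N =>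
      ENNReal.ofReal ((g z.1) ^ 2 * (ηR z.1 - ηR z.2) ^ 2 / ‖z.1 - z.2‖ ^ q)) := by
    apply Measurable.ennreal_ofReal
    apply Measurable.div
    · exact ((hg.comp measurable_fst).pow_const 2).mul
        (((hηm.comp measurable_fst).sub (hηm.comp measurable_snd)).pow_const 2)
    · exact (measurable_fst.sub measurable_snd).norm.pow measurable_const
  have hinm : ∀ x : Euc N, Measurable fun y : Euc N =>
      ENNReal.ofReal ((ηR x - ηR y) ^ 2 / ‖x - y‖ ^ q) := fun x => by
    apply Measurable.ennreal_ofReal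
    exact ((measurable_const.sub hηm).pow_const 2).div
      ((measurable_const.sub measurable_id).norm.pow measurable_const)
  -- ae equality on product
  have hprodnull : ((volume : Measure (Euc N)).prod (volume : Measure (Euc N)))
      {z : Euc N × Euc N | ¬ (u z.1 = g z.1)} = 0 := by
    have hnull0 : volume {x : Euc N | ¬ (u x = g x)} = 0 := ae_iff.1 hae
    have hsubset : {z : Euc N × Euc N | ¬ (u z.1 = g z.1)} ⊆
        ({x : Euc N | ¬ (u x = g x)} ×ˢ (univ : Set (Euc N))) := fun z hz =>
      Set.mem_prod.2 ⟨hz, mem_univ _⟩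
    apply measure_mono_null hsubset
    rw [Measure.prod_prod, hnull0, zero_mul]
  have hLae : ∀ᵐ z ∂ (((volume : Measure (Euc N)).restrict
      (Metric.ball (0 : Euc N) (2 * R))).prod (volume : Measure (Euc N))), u z.1 = g z.1 := by
    rw [Measure.restrict_prod_eq_prod_univ]
    exact ae_restrict_of_ae (ae_iff.2 hprodnull)
  have hRae : ∀ S : Set (Euc N), (∫⁻ x in S, ENNReal.ofReal ((u x) ^ 2)) =
      ∫⁻ x in S, ENNReal.ofReal ((g x) ^ 2) := fun S =>
    lintegral_congr_ae (ae_restrict_of_ae (hae.mono fun x hx => by simp only [hx]))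
  -- inner bounds
  have hRs : (0:ℝ) ≤ R ^ (-(2*s)) := Real.rpow_nonneg hR.le _
  have hθR : (0:ℝ) < (1 - θ) * R := by nlinarith
  have hθRs : (0:ℝ) ≤ ((1 - θ) * R) ^ (-(2*s)) := Real.rpow_nonneg hθR.le _
  have hI1 : ∀ x : Euc N, (∫⁻ y, ENNReal.ofReal ((ηR x - ηR y) ^ 2 / ‖x - y‖ ^ q)) ≤
      ENNReal.ofReal (C * R ^ (-(2 * s))) := by
    intro x
    refine le_trans (inner1 hN0 q R (c / R) hqN hq2 hR (by positivity) ηR hη01 hηlip x)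
      (ENNReal.ofReal_le_ofReal ?_)
    have e1 : (N : ℝ) + 2 - q = 2 - 2 * s := by rw [hq]; ring
    have e2 : (N : ℝ) - q = -(2 * s) := by rw [hq]; ring
    rw [e1, e2]
    have eA : (c / R) ^ 2 * (Kin N q * R ^ ((2:ℝ) - 2 * s)) =
        c ^ 2 * Kin N q * R ^ (-(2 * s)) := by
      have e3 : R ^ ((2:ℝ) - 2 * s) = R ^ (2:ℝ) * R ^ (-(2 * s)) := by
        rw [← Real.rpow_add hR]; ring_nf
      have e4 : R ^ (2:ℝ) = R ^ (2:ℕ) := by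
        rw [← Real.rpow_natCast R 2]; norm_num
      rw [e3, e4, div_pow]
      field_simp
    rw [eA, hC]
    nlinarith [hRs]
  have hI2 : ∀ x ∈ Metric.ball (0 : Euc N) (θ * R),
      (∫⁻ y, ENNReal.ofReal ((ηR x - ηR y) ^ 2 / ‖x - y‖ ^ q)) ≤
      ENNReal.ofReal (C * ((1 - θ) * R) ^ (-(2 * s))) := by
    intro x hx
    refine le_trans (inner2 hN0 q R θ hqN hR hθ0 hθ1 ηR hη01 hη0 x hx)
      (ENNReal.ofReal_le_ofReal ?_)
    rw [show (N : ℝ) - q = -(2 * s) from by rw [hq]; ring, hC]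
    nlinarith [hθRs, mul_nonneg hKin hθRs,
      mul_nonneg (mul_nonneg (sq_nonneg c) hKin) hθRs]
  -- piece bounds
  have pieceθ : (∫⁻ x in Metric.ball (0 : Euc N) (θ * R), ENNReal.ofReal ((g x) ^ 2) *
      ∫⁻ y, ENNReal.ofReal ((ηR x - ηR y) ^ 2 / ‖x - y‖ ^ q)) ≤
      ENNReal.ofReal (C * ((1 - θ) * R) ^ (-(2 * s))) *
        ∫⁻ x in Metric.ball (0 : Euc N) (θ * R), ENNReal.ofReal ((g x) ^ 2) := by
    calc (∫⁻ x in Metric.ball (0 : Euc N) (θ * R), ENNReal.ofReal ((g x) ^ 2) *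
        ∫⁻ y, ENNReal.ofReal ((ηR x - ηR y) ^ 2 / ‖x - y‖ ^ q))
        ≤ ∫⁻ x in Metric.ball (0 : Euc N) (θ * R), ENNReal.ofReal ((g x) ^ 2) *
            ENNReal.ofReal (C * ((1 - θ) * R) ^ (-(2 * s))) := by
          refine setLIntegral_mono (Measurable.mul_const ((hg.pow_const 2).ennreal_ofReal) _)
            fun x hx => mul_le_mul_right (hI2 x hx) _
      _ = (∫⁻ x in Metric.ball (0 : Euc N) (θ * R), ENNReal.ofReal ((g x) ^ 2)) *
            ENNReal.ofReal (C * ((1 - θ) * R) ^ (-(2 * s))) :=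
          lintegral_mul_const _ ((hg.pow_const 2).ennreal_ofReal)
      _ = _ := mul_comm _ _
  have pieceD : (∫⁻ x in Metric.ball (0 : Euc N) (2 * R) \ Metric.ball (0 : Euc N) (θ * R),
      ENNReal.ofReal ((g x) ^ 2) *
      ∫⁻ y, ENNReal.ofReal ((ηR x - ηR y) ^ 2 / ‖x - y‖ ^ q)) ≤
      ENNReal.ofReal (C * R ^ (-(2 * s))) *
        ∫⁻ x in Metric.ball (0 : Euc N) (2 * R) \ Metric.ball (0 : Euc N) (θ * R),
          ENNReal.ofReal ((g x) ^ 2) := by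
    calc (∫⁻ x in Metric.ball (0 : Euc N) (2 * R) \ Metric.ball (0 : Euc N) (θ * R),
        ENNReal.ofReal ((g x) ^ 2) *
        ∫⁻ y, ENNReal.ofReal ((ηR x - ηR y) ^ 2 / ‖x - y‖ ^ q))
        ≤ ∫⁻ x in Metric.ball (0 : Euc N) (2 * R) \ Metric.ball (0 : Euc N) (θ * R),
            ENNReal.ofReal ((g x) ^ 2) * ENNReal.ofReal (C * R ^ (-(2 * s))) :=
          lintegral_mono fun x => mul_le_mul_right (hI1 x) _
      _ = (∫⁻ x in Metric.ball (0 : Euc N) (2 * R) \ Metric.ball (0 : Euc N) (θ * R),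
            ENNReal.ofReal ((g x) ^ 2)) * ENNReal.ofReal (C * R ^ (-(2 * s))) :=
          lintegral_mul_const _ ((hg.pow_const 2).ennreal_ofReal)
      _ = _ := mul_comm _ _
  have hinter : Metric.ball (0 : Euc N) (2 * R) ∩ Metric.ball (0 : Euc N) (θ * R) =
      Metric.ball (0 : Euc N) (θ * R) :=
    inter_eq_self_of_subset_right (Metric.ball_subset_ball (by nlinarith))
  calc (∫⁻ z : Euc N × Euc N in Metric.ball (0 : Euc N) (2 * R) ×ˢ (univ : Set (Euc N)),
      ENNReal.ofReal ((u z.1) ^ 2 * (ηR z.1 - ηR z.2) ^ 2 / ‖z.1 - z.2‖ ^ ((N : ℝ) + 2 * s)))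
      = ∫⁻ z : Euc N × Euc N, ENNReal.ofReal
          ((u z.1) ^ 2 * (ηR z.1 - ηR z.2) ^ 2 / ‖z.1 - z.2‖ ^ q)
          ∂ (((volume : Measure (Euc N)).restrict (Metric.ball (0 : Euc N) (2 * R))).prod
            (volume : Measure (Euc N))) := by
        rw [Measure.volume_eq_prod, ← Measure.restrict_prod_eq_prod_univ]
    _ = ∫⁻ z : Euc N × Euc N, ENNReal.ofReal
          ((g z.1) ^ 2 * (ηR z.1 - ηR z.2) ^ 2 / ‖z.1 - z.2‖ ^ q)
          ∂ (((volume : Measure (Euc N)).restrict (Metric.ball (0 : Euc N) (2 * R))).prod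
            (volume : Measure (Euc N))) :=
        lintegral_congr_ae (hLae.mono fun z hz => by simp only [hz])
    _ = ∫⁻ x in Metric.ball (0 : Euc N) (2 * R), ∫⁻ y, ENNReal.ofReal
          ((g x) ^ 2 * (ηR x - ηR y) ^ 2 / ‖x - y‖ ^ q) :=
        lintegral_prod _ hfm.aemeasurable
    _ = ∫⁻ x in Metric.ball (0 : Euc N) (2 * R), ENNReal.ofReal ((g x) ^ 2) *
          ∫⁻ y, ENNReal.ofReal ((ηR x - ηR y) ^ 2 / ‖x - y‖ ^ q) := by
        refine lintegral_congr fun x => ?_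
        rw [← lintegral_const_mul _ (hinm x)]
        refine lintegral_congr fun y => ?_
        rw [← ENNReal.ofReal_mul (sq_nonneg _), mul_div_assoc]
    _ = (∫⁻ x in Metric.ball (0 : Euc N) (θ * R), ENNReal.ofReal ((g x) ^ 2) *
          ∫⁻ y, ENNReal.ofReal ((ηR x - ηR y) ^ 2 / ‖x - y‖ ^ q)) +
        ∫⁻ x in Metric.ball (0 : Euc N) (2 * R) \ Metric.ball (0 : Euc N) (θ * R),
          ENNReal.ofReal ((g x) ^ 2) *
          ∫⁻ y, ENNReal.ofReal ((ηR x - ηR y) ^ 2 / ‖x - y‖ ^ q) := by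
        exact ((lintegral_inter_add_diff _ (Metric.ball (0 : Euc N) (2 * R))
          (show MeasurableSet (Metric.ball (0 : Euc N) (θ * R)) from measurableSet_ball)).symm).trans
          (by rw [hinter])
    _ ≤ (ENNReal.ofReal (C * ((1 - θ) * R) ^ (-(2 * s))) *
          ∫⁻ x in Metric.ball (0 : Euc N) (θ * R), ENNReal.ofReal ((g x) ^ 2)) +
        ENNReal.ofReal (C * R ^ (-(2 * s))) *
          ∫⁻ x in Metric.ball (0 : Euc N) (2 * R) \ Metric.ball (0 : Euc N) (θ * R),
            ENNReal.ofReal ((g x) ^ 2) := add_le_add pieceθ pieceD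
    _ = ENNReal.ofReal (C * R ^ (-(2 * s))) *
          (∫⁻ x in Metric.ball (0 : Euc N) (2 * R) \ Metric.ball (0 : Euc N) (θ * R),
            ENNReal.ofReal ((u x) ^ 2)) +
        ENNReal.ofReal (C * ((1 - θ) * R) ^ (-(2 * s))) *
          (∫⁻ x in Metric.ball (0 : Euc N) (θ * R), ENNReal.ofReal ((u x) ^ 2)) := by
        rw [hRae, hRae, add_comm]
end

section
/- Fix ε > 0 and let a > 0 be sufficiently small. If (u,v) ∈ X_ε satisfies ⟨J'_ε(u,v),(φ,ψ)⟩ = 0 for all (φ,ψ) ∈ X_ε, then u ≥ 0 and v ≥ 0 almost everywhere in ℝ^N. -/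
open MeasureTheory Real Set Filter

section Helpers

open MeasureTheory Real Set Filter

/-! ### Pointwise lemmas about `min · 0` -/

lemma abs_minz_sub (a b : ℝ) : |min a 0 - min b 0| ≤ |a - b| := by
  have h0 := abs_nonneg (a - b)
  have h1 := le_abs_self (a - b)
  have h3 : b - a ≤ |a - b| := by rw [abs_sub_comm]; exact le_abs_self _
  rcases le_total a 0 with h | h <;> rcases le_total b 0 with h' | h' <;>
    [rw [min_eq_left h, min_eq_left h']; rw [min_eq_left h, min_eq_right h'];
     rw [min_eq_right h, min_eq_left h']; rw [min_eq_right h, min_eq_right h']] <;>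
    rw [abs_le] <;> constructor <;> linarith

lemma minz_sq_le (a b : ℝ) : (min a 0 - min b 0) ^ 2 ≤ (a - b) ^ 2 := by
  have h := abs_minz_sub a b
  calc (min a 0 - min b 0) ^ 2 = |min a 0 - min b 0| ^ 2 := (sq_abs _).symm
    _ ≤ |a - b| ^ 2 := by
        apply pow_le_pow_left₀ (abs_nonneg _) h
    _ = (a - b) ^ 2 := sq_abs _

lemma minz_sq_le_mul (a b : ℝ) :
    (min a 0 - min b 0) ^ 2 ≤ (a - b) * (min a 0 - min b 0) := by
  rcases le_total a 0 with h | h <;> rcases le_total b 0 with h' | h'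
  · rw [min_eq_left h, min_eq_left h']; nlinarith
  · rw [min_eq_left h, min_eq_right h']; nlinarith [mul_nonneg h' (neg_nonneg.mpr h)]
  · rw [min_eq_right h, min_eq_left h']; nlinarith [mul_nonneg h (neg_nonneg.mpr h')]
  · rw [min_eq_right h, min_eq_right h']; nlinarith

lemma abs_mul_minz_le (a b : ℝ) :
    |(a - b) * (min a 0 - min b 0)| ≤ (a - b) ^ 2 := by
  rw [abs_mul]
  calc |a - b| * |min a 0 - min b 0| ≤ |a - b| * |a - b| :=
        mul_le_mul_of_nonneg_left (abs_minz_sub a b) (abs_nonneg _)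
    _ = (a - b) ^ 2 := by rw [← abs_mul, abs_mul_self]; ring

lemma mul_minz (a : ℝ) : a * min a 0 = (min a 0) ^ 2 := by
  rcases le_total a 0 with h | h
  · rw [min_eq_left h]; ring
  · rw [min_eq_right h]; ring

lemma div_le_div_nonneg_right {a b d : ℝ} (h : a ≤ b) (hd : 0 ≤ d) : a / d ≤ b / d := by
  rcases eq_or_lt_of_le hd with h0 | h0
  · simp [← h0]
  · exact div_le_div_of_nonneg_right h h0.le

/-! ### Measurability of kernels -/

lemma meas_dker {N : ℕ} (s : ℝ) (he : 0 ≤ (N : ℝ) + 2 * s) :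
    Measurable (fun z : Euc N × Euc N => ‖z.1 - z.2‖ ^ ((N : ℝ) + 2 * s)) := by
  apply Continuous.measurable
  exact ((continuous_fst.sub continuous_snd).norm).rpow_const (fun z => Or.inr he)

lemma aesm_mixed {N : ℕ} (s : ℝ) (he : 0 ≤ (N : ℝ) + 2 * s) {u w : Euc N → ℝ}
    (hu : AEStronglyMeasurable u (volume : Measure (Euc N)))
    (hw : AEStronglyMeasurable w (volume : Measure (Euc N))) :
    AEStronglyMeasurable
      (fun z : Euc N × Euc N =>
        (u z.1 - u z.2) * (w z.1 - w z.2) / ‖z.1 - z.2‖ ^ ((N : ℝ) + 2 * s))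
      (volume : Measure (Euc N × Euc N)) := by
  rw [Measure.volume_eq_prod]
  have h1 : AEStronglyMeasurable (fun z : Euc N × Euc N => u z.1 - u z.2)
      ((volume : Measure (Euc N)).prod volume) := hu.comp_fst.sub hu.comp_snd
  have h2 : AEStronglyMeasurable (fun z : Euc N × Euc N => w z.1 - w z.2)
      ((volume : Measure (Euc N)).prod volume) := hw.comp_fst.sub hw.comp_snd
  exact ((h1.aemeasurable.mul h2.aemeasurable).div
    ((meas_dker s he).aemeasurable)).aestronglyMeasurable

lemma aesm_gag {N : ℕ} (s : ℝ) (he : 0 ≤ (N : ℝ) + 2 * s) {w : Euc N → ℝ}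
    (hw : AEStronglyMeasurable w (volume : Measure (Euc N))) :
    AEStronglyMeasurable (gagKer N s w) (volume : Measure (Euc N × Euc N)) := by
  have := aesm_mixed s he hw hw
  have hfun : gagKer N s w = fun z : Euc N × Euc N =>
      (w z.1 - w z.2) * (w z.1 - w z.2) / ‖z.1 - z.2‖ ^ ((N : ℝ) + 2 * s) := by
    funext z; simp [gagKer]; ring
  rw [hfun]; exact this

/-! ### Nonnegativity and bound on `Aconst` -/

lemma Q_nonneg {p : ℝ} (QS : QSetup p) (u v : ℝ) : 0 ≤ QS.Q u v := by
  rcases le_or_gt u 0 with h | h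
  · rw [QS.ext_zero u v (Or.inl h)]
  · rcases le_or_gt v 0 with h' | h'
    · rw [QS.ext_zero u v (Or.inr h')]
    · exact (QS.q5 u v h h').le

lemma Aconst_nonneg {p : ℝ} (QS : QSetup p) (a : ℝ) : 0 ≤ Aconst QS a := by
  apply Real.sSup_nonneg
  rintro y ⟨z, _, rfl⟩
  exact div_nonneg (Q_nonneg QS _ _) (by positivity)

lemma Aconst_le {p : ℝ} (QS : QSetup p) (hp2 : 2 < p) :
    ∃ C : ℝ, 0 ≤ C ∧ ∀ a : ℝ, 0 < a → Aconst QS a ≤ C * a ^ (p - 2) := by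
  obtain ⟨M, hM⟩ := (isCompact_Icc.prod isCompact_Icc :
      IsCompact ((Icc (0:ℝ) 1) ×ˢ (Icc (0:ℝ) 1))).exists_bound_of_continuousOn
    (QS.smooth.continuousOn.mono (fun z hz => ⟨hz.1.1, hz.2.1⟩))
  have hM0 : 0 ≤ M := le_trans (norm_nonneg _) (hM (0, 0) (by constructor <;> constructor <;> norm_num))
  refine ⟨5 ^ (p - 2) * M, by positivity, fun a ha => ?_⟩
  apply Real.sSup_le _ (by positivity)
  rintro y ⟨z, ⟨hza, hz5⟩, rfl⟩
  show QS.Q z.1 z.2 / (z.1 ^ 2 + z.2 ^ 2) ≤ 5 ^ (p - 2) * M * a ^ (p - 2)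
  rcases le_or_gt z.1 0 with h1 | h1
  · rw [QS.ext_zero _ _ (Or.inl h1), zero_div]; positivity
  rcases le_or_gt z.2 0 with h2 | h2
  · rw [QS.ext_zero _ _ (Or.inr h2), zero_div]; positivity
  have hq0 : 0 < z.1 ^ 2 + z.2 ^ 2 := by positivity
  set r := Real.sqrt (z.1 ^ 2 + z.2 ^ 2) with hrdef
  have hr0 : 0 < r := Real.sqrt_pos.mpr hq0
  have hrsq : r ^ 2 = z.1 ^ 2 + z.2 ^ 2 := Real.sq_sqrt hq0.le
  have hz1r : z.1 ≤ r := by nlinarith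
  have hz2r : z.2 ≤ r := by nlinarith
  have hQhom : QS.Q z.1 z.2 = r ^ p * QS.Q (z.1 / r) (z.2 / r) := by
    have h := QS.q1 r hr0 (z.1 / r) (z.2 / r) (by positivity) (by positivity)
    have e1 : r * (z.1 / r) = z.1 := by field_simp
    have e2 : r * (z.2 / r) = z.2 := by field_simp
    rw [e1, e2] at h; exact h
  have hQb : QS.Q (z.1 / r) (z.2 / r) ≤ M := by
    have hmem : ((z.1 / r, z.2 / r) : ℝ × ℝ) ∈ (Icc (0:ℝ) 1) ×ˢ (Icc (0:ℝ) 1) := by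
      refine ⟨⟨by positivity, ?_⟩, ⟨by positivity, ?_⟩⟩ <;>
        rw [div_le_one hr0] <;> assumption
    have := hM _ hmem
    rw [Real.norm_eq_abs] at this
    exact (abs_le.mp this).2
  have hQb0 : 0 ≤ QS.Q (z.1 / r) (z.2 / r) := Q_nonneg QS _ _
  have key : QS.Q z.1 z.2 / (z.1 ^ 2 + z.2 ^ 2) = r ^ (p - 2) * QS.Q (z.1 / r) (z.2 / r) := by
    have hrp : r ^ p = r ^ (p - 2) * r ^ 2 := by
      rw [← Real.rpow_natCast r 2, ← Real.rpow_add hr0]; norm_num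
    rw [hQhom, ← hrsq, hrp]
    field_simp
  rw [key]
  have hr5 : r ≤ 5 * a := hz5
  calc r ^ (p - 2) * QS.Q (z.1 / r) (z.2 / r) ≤ (5 * a) ^ (p - 2) * M :=
        mul_le_mul (Real.rpow_le_rpow hr0.le hr5 (by linarith)) hQb hQb0
          (Real.rpow_nonneg (by positivity) _)
    _ = 5 ^ (p - 2) * M * a ^ (p - 2) := by
        rw [Real.mul_rpow (by norm_num) ha.le]; ring

/-! ### Bound on the derivative of the penalized nonlinearity on the negative half-line -/

lemma gcore {a cη A : ℝ} (ha : 0 < a) (hcη : 0 < cη) (hA : 0 ≤ A) (E : EtaSetup a cη)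
    (w c : ℝ) (hw : w < 0) :
    w * deriv (fun t => (1 - E.η (Real.sqrt (t ^ 2 + c ^ 2))) * (A * (t ^ 2 + c ^ 2))) w ≤
      (5 * cη + 2) * (A * w ^ 2) := by
  have hwne : w ≠ 0 := hw.ne
  have hqpos : (0 : ℝ) < w ^ 2 + c ^ 2 := by positivity
  set r := Real.sqrt (w ^ 2 + c ^ 2) with hrdef
  have hr0 : 0 < r := Real.sqrt_pos.mpr hqpos
  have hrsq : r ^ 2 = w ^ 2 + c ^ 2 := Real.sq_sqrt hqpos.le
  have hq : HasDerivAt (fun t : ℝ => t ^ 2 + c ^ 2) (2 * w) w := by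
    simpa using (hasDerivAt_pow 2 w).add_const (c ^ 2)
  have hsq : HasDerivAt (fun t : ℝ => Real.sqrt (t ^ 2 + c ^ 2)) (1 / (2 * r) * (2 * w)) w := by
    simpa [Function.comp_def] using (Real.hasDerivAt_sqrt hqpos.ne').comp w hq
  have hηd : HasDerivAt E.η (deriv E.η r) r :=
    ((E.smooth.differentiable (by norm_num)) r).hasDerivAt
  have hcomp : HasDerivAt (fun t : ℝ => E.η (Real.sqrt (t ^ 2 + c ^ 2)))
      (deriv E.η r * (1 / (2 * r) * (2 * w))) w := by
    simpa [Function.comp_def] using hηd.comp w hsq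
  have hg := ((hasDerivAt_const w (1 : ℝ)).sub hcomp).mul (hq.const_mul A)
  have hg' : HasDerivAt (fun t => (1 - E.η (Real.sqrt (t ^ 2 + c ^ 2))) * (A * (t ^ 2 + c ^ 2)))
      ((0 - deriv E.η r * (1 / (2 * r) * (2 * w))) * (A * (w ^ 2 + c ^ 2)) +
        (1 - E.η r) * (A * (2 * w))) w := hg
  rw [hg'.deriv]
  have hme := E.mem01 r
  have hval : w * ((0 - deriv E.η r * (1 / (2 * r) * (2 * w))) * (A * (w ^ 2 + c ^ 2)) +
        (1 - E.η r) * (A * (2 * w))) =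
      -(deriv E.η r * (A * (w ^ 2 * r))) + (1 - E.η r) * (2 * A * w ^ 2) := by
    rw [← hrsq]; field_simp; ring
  rw [hval]
  have hterm2 : (1 - E.η r) * (2 * A * w ^ 2) ≤ 2 * (A * w ^ 2) := by
    nlinarith [sq_nonneg w, hme.1, hme.2, hA, mul_nonneg hA (sq_nonneg w)]
  rcases le_or_gt r (5 * a) with h5 | h5
  · have habs := E.bd1 r
    have hnd : -(deriv E.η r) ≤ cη / a := by
      rw [abs_le] at habs; linarith [habs.1]
    have t1 : -(deriv E.η r * (A * (w ^ 2 * r))) ≤ cη / a * (A * (w ^ 2 * r)) := by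
      have := mul_le_mul_of_nonneg_right hnd (show (0:ℝ) ≤ A * (w ^ 2 * r) by positivity)
      nlinarith [this]
    have t2 : cη / a * (A * (w ^ 2 * r)) ≤ cη / a * (A * (w ^ 2 * (5 * a))) := by
      apply mul_le_mul_of_nonneg_left _ (by positivity)
      nlinarith [sq_nonneg w, hA, hr0.le, mul_nonneg hA (mul_nonneg (sq_nonneg w) (sub_nonneg.mpr h5))]
    have t3 : cη / a * (A * (w ^ 2 * (5 * a))) = 5 * cη * (A * w ^ 2) := by
      field_simp
    nlinarith [t1, t2, hterm2]
  · have hd0 : deriv E.η r = 0 := by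
      have hev : E.η =ᶠ[nhds r] fun _ => (0 : ℝ) :=
        eventually_of_mem (Ioi_mem_nhds h5) (fun t ht => E.eq_zero t (le_of_lt ht))
      rw [hev.deriv_eq, deriv_const]
    rw [hd0]
    nlinarith [hterm2, mul_nonneg hA (sq_nonneg w), hcη.le]

lemma hKeyU {N : ℕ} {p : ℝ} (QS : QSetup p) {a cη A : ℝ} (ha : 0 < a) (hcη : 0 < cη)
    (hA : 0 ≤ A) (E : EtaSetup a cη) (Λ : Set (Euc N)) (x : Euc N) (u v : ℝ) (hu : u < 0) :
    u * HpenU QS E.η A Λ x u v ≤ (5 * cη + 2) * (A * u ^ 2) := by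
  unfold HpenU pdU
  by_cases hx : x ∈ Λ
  · have hev : (fun t => Hpen QS E.η A Λ x t v) =ᶠ[nhds u] fun _ => (0 : ℝ) := by
      filter_upwards [Iio_mem_nhds hu] with t ht
      simp [Hpen, Set.indicator_of_mem hx, QS.ext_zero t v (Or.inl (le_of_lt ht))]
    rw [hev.deriv_eq, deriv_const, mul_zero]
    positivity
  · have hev : (fun t => Hpen QS E.η A Λ x t v) =ᶠ[nhds u]
        (fun t => (1 - E.η (Real.sqrt (t ^ 2 + v ^ 2))) * (A * (t ^ 2 + v ^ 2))) := by
      filter_upwards [Iio_mem_nhds hu] with t ht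
      simp [Hpen, Qhat, Set.indicator_of_notMem hx, QS.ext_zero t v (Or.inl (le_of_lt ht))]
    rw [hev.deriv_eq]
    exact gcore ha hcη hA E u v hu

lemma hKeyV {N : ℕ} {p : ℝ} (QS : QSetup p) {a cη A : ℝ} (ha : 0 < a) (hcη : 0 < cη)
    (hA : 0 ≤ A) (E : EtaSetup a cη) (Λ : Set (Euc N)) (x : Euc N) (u v : ℝ) (hv : v < 0) :
    v * HpenV QS E.η A Λ x u v ≤ (5 * cη + 2) * (A * v ^ 2) := by
  unfold HpenV pdV
  by_cases hx : x ∈ Λ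
  · have hev : (fun t => Hpen QS E.η A Λ x u t) =ᶠ[nhds v] fun _ => (0 : ℝ) := by
      filter_upwards [Iio_mem_nhds hv] with t ht
      simp [Hpen, Set.indicator_of_mem hx, QS.ext_zero u t (Or.inr (le_of_lt ht))]
    rw [hev.deriv_eq, deriv_const, mul_zero]
    positivity
  · have hev : (fun t => Hpen QS E.η A Λ x u t) =ᶠ[nhds v]
        (fun t => (1 - E.η (Real.sqrt (t ^ 2 + u ^ 2))) * (A * (t ^ 2 + u ^ 2))) := by
      filter_upwards [Iio_mem_nhds hv] with t ht
      have h1 : u ^ 2 + t ^ 2 = t ^ 2 + u ^ 2 := by ring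
      simp [Hpen, Qhat, Set.indicator_of_notMem hx, QS.ext_zero u t (Or.inr (le_of_lt ht)), h1]
    rw [hev.deriv_eq]
    exact gcore ha hcη hA E v u hv

/-! ### The main testing argument -/

lemma conclude {N : ℕ} (s : ℝ) (he : 0 ≤ (N : ℝ) + 2 * s)
    (w Vf Hf : Euc N → ℝ) (K ρ : ℝ)
    (hρ : 0 < ρ) (hK : 0 ≤ K) (hKρ : K < ρ)
    (hw : AEStronglyMeasurable w (volume : Measure (Euc N)))
    (hgagw : Integrable (gagKer N s w))
    (hVwsq : Integrable (fun x => Vf x * min (w x) 0 ^ 2))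
    (hwsq : Integrable (fun x => min (w x) 0 ^ 2))
    (hVf : ∀ x, ρ ≤ Vf x)
    (hH : ∀ x, min (w x) 0 * Hf x ≤ K * min (w x) 0 ^ 2)
    (heq : (∫ z : Euc N × Euc N,
        (w z.1 - w z.2) * (min (w z.1) 0 - min (w z.2) 0) / ‖z.1 - z.2‖ ^ ((N : ℝ) + 2 * s))
      + (∫ x, Vf x * w x * min (w x) 0)
      - (∫ x, min (w x) 0 * Hf x) = 0) :
    ∀ᵐ x : Euc N, 0 ≤ w x := by
  have hmas : AEStronglyMeasurable (fun x => min (w x) 0) (volume : Measure (Euc N)) :=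
    (hw.aemeasurable.min aemeasurable_const).aestronglyMeasurable
  -- the mixed kernel is integrable
  have hmixed_int : Integrable (fun z : Euc N × Euc N =>
      (w z.1 - w z.2) * (min (w z.1) 0 - min (w z.2) 0) / ‖z.1 - z.2‖ ^ ((N : ℝ) + 2 * s)) := by
    apply hgagw.mono (aesm_mixed s he hw hmas)
    filter_upwards with z
    simp only [gagKer, Real.norm_eq_abs]
    rw [abs_div, abs_div, abs_of_nonneg (Real.rpow_nonneg (norm_nonneg _) _),
      abs_of_nonneg (sq_nonneg (w z.1 - w z.2))]
    exact div_le_div_nonneg_right (abs_mul_minz_le _ _) (Real.rpow_nonneg (norm_nonneg _) _)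
  -- the Gagliardo kernel of the negative part is integrable
  have hgagm_int : Integrable (gagKer N s (fun x => min (w x) 0)) := by
    apply hgagw.mono (aesm_gag s he hmas)
    filter_upwards with z
    simp only [gagKer, Real.norm_eq_abs]
    rw [abs_of_nonneg (div_nonneg (sq_nonneg _) (Real.rpow_nonneg (norm_nonneg _) _)),
      abs_of_nonneg (div_nonneg (sq_nonneg _) (Real.rpow_nonneg (norm_nonneg _) _))]
    exact div_le_div_nonneg_right (minz_sq_le _ _) (Real.rpow_nonneg (norm_nonneg _) _)
  -- step 1 : the Gagliardo energy of the negative part is below the mixed term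
  have step1 : (∫ z, gagKer N s (fun x => min (w x) 0) z) ≤
      ∫ z : Euc N × Euc N,
        (w z.1 - w z.2) * (min (w z.1) 0 - min (w z.2) 0) / ‖z.1 - z.2‖ ^ ((N : ℝ) + 2 * s) := by
    apply integral_mono hgagm_int hmixed_int
    intro z
    simp only [gagKer]
    exact div_le_div_nonneg_right (minz_sq_le_mul _ _) (Real.rpow_nonneg (norm_nonneg _) _)
  have hgag_nonneg : (0:ℝ) ≤ ∫ z, gagKer N s (fun x => min (w x) 0) z :=
    integral_nonneg fun z => div_nonneg (sq_nonneg _) (Real.rpow_nonneg (norm_nonneg _) _)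
  -- step 2 : rewrite the potential term
  have step2 : (∫ x, Vf x * w x * min (w x) 0) = ∫ x, Vf x * min (w x) 0 ^ 2 := by
    apply integral_congr_ae; filter_upwards with x
    rw [mul_assoc, mul_minz]
  -- step 3 : lower bound for the potential term
  have step3 : ρ * ∫ x, min (w x) 0 ^ 2 ≤ ∫ x, Vf x * min (w x) 0 ^ 2 := by
    rw [← integral_const_mul]
    exact integral_mono (hwsq.const_mul ρ) hVwsq
      (fun x => mul_le_mul_of_nonneg_right (hVf x) (sq_nonneg _))
  -- step 4 : upper bound for the `H` term
  have step4 : (∫ x, min (w x) 0 * Hf x) ≤ K * ∫ x, min (w x) 0 ^ 2 := by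
    by_cases hIH : Integrable (fun x => min (w x) 0 * Hf x)
    · rw [← integral_const_mul]
      exact integral_mono hIH (hwsq.const_mul K) hH
    · rw [integral_undef hIH]
      exact mul_nonneg hK (integral_nonneg fun x => sq_nonneg _)
  have hIpos : (0:ℝ) ≤ ∫ x, min (w x) 0 ^ 2 := integral_nonneg fun x => sq_nonneg _
  have hIzero : (∫ x, min (w x) 0 ^ 2) = 0 := by
    rw [step2] at heq
    nlinarith [step1, step3, step4, hgag_nonneg, hIpos]
  have hae : (fun x => min (w x) 0 ^ 2) =ᵐ[volume] 0 :=
    (integral_eq_zero_iff_of_nonneg (fun x => sq_nonneg _) hwsq).mp hIzero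
  filter_upwards [hae] with x hx
  simpa using hx

end Helpers

set_option maxHeartbeats 1600000

/-- critical points of `J_ε` have nonnegative components. -/
theorem stmt12 {N : ℕ} (s p : ℝ) (hs : 0 < s ∧ s < 1) (hN : 2 * s < (N : ℝ))
    (hp : 2 < p ∧ p < 2 * (N : ℝ) / ((N : ℝ) - 2 * s))
    (QS : QSetup p) (P : PotSetup N) (cη : ℝ) (hcη : 0 < cη) :
    ∀ ε : ℝ, 0 < ε → ∃ a₀ > 0, ∀ a : ℝ, 0 < a → a < a₀ → ∀ E : EtaSetup a cη,
      ∀ u v : Euc N → ℝ, MemXe s P ε u v →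
      (∀ φ ψ : Euc N → ℝ, MemXe s P ε φ ψ →
        pairJe s QS E.η (Aconst QS a) P ε u v φ ψ = 0) →
      (∀ᵐ x : Euc N, 0 ≤ u x) ∧ (∀ᵐ x : Euc N, 0 ≤ v x) := by
  intro ε hε
  have hcη2 : (0:ℝ) ≤ 5 * cη + 2 := by positivity
  have hp2 : 0 < p - 2 := by linarith [hp.1]
  obtain ⟨C, hC0, hCb⟩ := Aconst_le QS hp.1
  have hδ : 0 < min (P.V P.x₀) (P.W P.x₀) := lt_min P.h3.2.2.1 P.h3.2.2.2
  set δ : ℝ := min (P.V P.x₀) (P.W P.x₀) with hδdef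
  have hD : (0:ℝ) < (5 * cη + 2) * C + 1 := by positivity
  set D : ℝ := (5 * cη + 2) * C + 1 with hDdef
  refine ⟨(δ / D) ^ (p - 2)⁻¹, Real.rpow_pos_of_pos (div_pos hδ hD) _, ?_⟩
  intro a ha haa E u v hmem hpair
  have hApos : 0 ≤ Aconst QS a := Aconst_nonneg QS a
  have hK0 : 0 ≤ (5 * cη + 2) * Aconst QS a := by positivity
  have haP : a ^ (p - 2) < δ / D := by
    have h1 : a ^ (p - 2) < ((δ / D) ^ (p - 2)⁻¹) ^ (p - 2) :=
      Real.rpow_lt_rpow ha.le haa hp2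
    rwa [Real.rpow_inv_rpow (div_pos hδ hD).le (ne_of_gt hp2)] at h1
  have hKδ : (5 * cη + 2) * Aconst QS a < δ := by
    have h2 : Aconst QS a ≤ C * a ^ (p - 2) := hCb a ha
    have h5 : (5 * cη + 2) * Aconst QS a ≤ (5 * cη + 2) * (C * a ^ (p - 2)) :=
      mul_le_mul_of_nonneg_left h2 hcη2
    have h6 : ((5 * cη + 2) * C) * a ^ (p - 2) ≤ ((5 * cη + 2) * C) * (δ / D) :=
      mul_le_mul_of_nonneg_left haP.le (mul_nonneg hcη2 hC0)
    have h7 : ((5 * cη + 2) * C) * (δ / D) < D * (δ / D) := by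
      apply mul_lt_mul_of_pos_right _ (div_pos hδ hD)
      rw [hDdef]; linarith
    have h8 : D * (δ / D) = δ := by field_simp
    nlinarith [h5, h6, h7]
  have hKV : (5 * cη + 2) * Aconst QS a < P.V P.x₀ :=
    lt_of_lt_of_le hKδ (min_le_left _ _)
  have hKW : (5 * cη + 2) * Aconst QS a < P.W P.x₀ :=
    lt_of_lt_of_le hKδ (min_le_right _ _)
  have hs2 : (0:ℝ) ≤ (N : ℝ) + 2 * s := by
    have := hs.1
    have hN0 : (0:ℝ) ≤ (N : ℝ) := Nat.cast_nonneg N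
    linarith
  obtain ⟨⟨huLp, hugag⟩, ⟨hvLp, hvgag⟩, hVW⟩ := hmem
  have humeas := huLp.aestronglyMeasurable
  have hvmeas := hvLp.aestronglyMeasurable
  have hV0 : ∀ x : Euc N, (0:ℝ) ≤ P.V x := fun x => le_trans P.h3.2.2.1.le (P.h3.1 x)
  have hW0 : ∀ x : Euc N, (0:ℝ) ≤ P.W x := fun x => le_trans P.h3.2.2.2.le (P.h3.2.1 x)
  have hVc : Continuous fun x : Euc N => P.V (ε • x) := P.contV.comp (continuous_const_smul ε)
  have hWc : Continuous fun x : Euc N => P.W (ε • x) := P.contW.comp (continuous_const_smul ε)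
  have hzLp : MemLp (fun _ : Euc N => (0:ℝ)) 2 (volume : Measure (Euc N)) := MemLp.zero'
  have hzgag : Integrable (gagKer N s (fun _ : Euc N => (0:ℝ))) := by
    have h0 : gagKer N s (fun _ : Euc N => (0:ℝ)) = fun _ => 0 := by
      funext z; simp [gagKer]
    rw [h0]; exact integrable_zero _ _ _
  constructor
  · -- nonnegativity of u
    have hφmeas : AEStronglyMeasurable (fun x => min (u x) 0) (volume : Measure (Euc N)) :=
      (humeas.aemeasurable.min aemeasurable_const).aestronglyMeasurable
    have hφsq : AEStronglyMeasurable (fun x => min (u x) 0 ^ 2) (volume : Measure (Euc N)) := by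
      simpa [pow_two, Pi.mul_def] using hφmeas.mul hφmeas
    have hφLp : MemLp (fun x => min (u x) 0) 2 (volume : Measure (Euc N)) :=
      MemLp.of_le huLp hφmeas (Filter.Eventually.of_forall fun x => by
        rw [Real.norm_eq_abs, Real.norm_eq_abs]
        simpa using abs_minz_sub (u x) 0)
    have hφgag : Integrable (gagKer N s (fun x => min (u x) 0)) := by
      apply hugag.mono (aesm_gag s hs2 hφmeas)
      filter_upwards with z
      simp only [gagKer, Real.norm_eq_abs]
      rw [abs_of_nonneg (div_nonneg (sq_nonneg _) (Real.rpow_nonneg (norm_nonneg _) _)),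
        abs_of_nonneg (div_nonneg (sq_nonneg _) (Real.rpow_nonneg (norm_nonneg _) _))]
      exact div_le_div_nonneg_right (minz_sq_le _ _) (Real.rpow_nonneg (norm_nonneg _) _)
    have hVφ' : Integrable (fun x => P.V (ε • x) * min (u x) 0 ^ 2) := by
      have hmeasprod : AEStronglyMeasurable (fun x => P.V (ε • x) * min (u x) 0 ^ 2)
          (volume : Measure (Euc N)) := hVc.aestronglyMeasurable.mul hφsq
      apply hVW.mono hmeasprod
      filter_upwards with x
      rw [Real.norm_eq_abs, Real.norm_eq_abs,
        abs_of_nonneg (mul_nonneg (hV0 _) (sq_nonneg _)),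
        abs_of_nonneg (add_nonneg (mul_nonneg (hV0 _) (sq_nonneg _))
          (mul_nonneg (hW0 _) (sq_nonneg _)))]
      have hm : min (u x) 0 ^ 2 ≤ u x ^ 2 := by simpa using minz_sq_le (u x) 0
      nlinarith [mul_le_mul_of_nonneg_left hm (hV0 (ε • x)),
        mul_nonneg (hW0 (ε • x)) (sq_nonneg (v x))]
    have hVφ : Integrable (fun x =>
        P.V (ε • x) * (fun x => min (u x) 0) x ^ 2 +
        P.W (ε • x) * (fun _ : Euc N => (0:ℝ)) x ^ 2) := by
      simpa using hVφ'
    have h0 := hpair (fun x => min (u x) 0) (fun _ => 0) ⟨⟨hφLp, hφgag⟩, ⟨hzLp, hzgag⟩, hVφ⟩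
    simp only [pairJe, sub_self, mul_zero, zero_mul, zero_div, integral_zero, add_zero] at h0
    have hH : ∀ x : Euc N, min (u x) 0 *
        HpenU QS E.η (Aconst QS a) P.Λ (ε • x) (u x) (v x) ≤
        (5 * cη + 2) * Aconst QS a * min (u x) 0 ^ 2 := by
      intro x
      rcases lt_or_ge (u x) 0 with h | h
      · rw [min_eq_left h.le]
        calc u x * HpenU QS E.η (Aconst QS a) P.Λ (ε • x) (u x) (v x) ≤
              (5 * cη + 2) * (Aconst QS a * u x ^ 2) :=
                hKeyU QS ha hcη hApos E P.Λ (ε • x) (u x) (v x) h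
          _ = (5 * cη + 2) * Aconst QS a * u x ^ 2 := by ring
      · rw [min_eq_right h]; simp
    exact conclude s hs2 u (fun x => P.V (ε • x))
      (fun x => HpenU QS E.η (Aconst QS a) P.Λ (ε • x) (u x) (v x))
      ((5 * cη + 2) * Aconst QS a) (P.V P.x₀) P.h3.2.2.1 hK0 hKV humeas hugag
      hVφ' hφLp.integrable_sq (fun x => P.h3.1 (ε • x)) hH h0
  · -- nonnegativity of v
    have hφmeas : AEStronglyMeasurable (fun x => min (v x) 0) (volume : Measure (Euc N)) :=
      (hvmeas.aemeasurable.min aemeasurable_const).aestronglyMeasurable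
    have hφsq : AEStronglyMeasurable (fun x => min (v x) 0 ^ 2) (volume : Measure (Euc N)) := by
      simpa [pow_two, Pi.mul_def] using hφmeas.mul hφmeas
    have hφLp : MemLp (fun x => min (v x) 0) 2 (volume : Measure (Euc N)) :=
      MemLp.of_le hvLp hφmeas (Filter.Eventually.of_forall fun x => by
        rw [Real.norm_eq_abs, Real.norm_eq_abs]
        simpa using abs_minz_sub (v x) 0)
    have hφgag : Integrable (gagKer N s (fun x => min (v x) 0)) := by
      apply hvgag.mono (aesm_gag s hs2 hφmeas)
      filter_upwards with z
      simp only [gagKer, Real.norm_eq_abs]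
      rw [abs_of_nonneg (div_nonneg (sq_nonneg _) (Real.rpow_nonneg (norm_nonneg _) _)),
        abs_of_nonneg (div_nonneg (sq_nonneg _) (Real.rpow_nonneg (norm_nonneg _) _))]
      exact div_le_div_nonneg_right (minz_sq_le _ _) (Real.rpow_nonneg (norm_nonneg _) _)
    have hVφ' : Integrable (fun x => P.W (ε • x) * min (v x) 0 ^ 2) := by
      have hmeasprod : AEStronglyMeasurable (fun x => P.W (ε • x) * min (v x) 0 ^ 2)
          (volume : Measure (Euc N)) := hWc.aestronglyMeasurable.mul hφsq
      apply hVW.mono hmeasprod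
      filter_upwards with x
      rw [Real.norm_eq_abs, Real.norm_eq_abs,
        abs_of_nonneg (mul_nonneg (hW0 _) (sq_nonneg _)),
        abs_of_nonneg (add_nonneg (mul_nonneg (hV0 _) (sq_nonneg _))
          (mul_nonneg (hW0 _) (sq_nonneg _)))]
      have hm : min (v x) 0 ^ 2 ≤ v x ^ 2 := by simpa using minz_sq_le (v x) 0
      nlinarith [mul_le_mul_of_nonneg_left hm (hW0 (ε • x)),
        mul_nonneg (hV0 (ε • x)) (sq_nonneg (u x))]
    have hVφ : Integrable (fun x =>
        P.V (ε • x) * (fun _ : Euc N => (0:ℝ)) x ^ 2 +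
        P.W (ε • x) * (fun x => min (v x) 0) x ^ 2) := by
      simpa using hVφ'
    have h0 := hpair (fun _ => 0) (fun x => min (v x) 0) ⟨⟨hzLp, hzgag⟩, ⟨hφLp, hφgag⟩, hVφ⟩
    simp only [pairJe, sub_self, mul_zero, zero_mul, zero_div, integral_zero, add_zero,
      zero_add] at h0
    have hH : ∀ x : Euc N, min (v x) 0 *
        HpenV QS E.η (Aconst QS a) P.Λ (ε • x) (u x) (v x) ≤
        (5 * cη + 2) * Aconst QS a * min (v x) 0 ^ 2 := by
      intro x
      rcases lt_or_ge (v x) 0 with h | h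
      · rw [min_eq_left h.le]
        calc v x * HpenV QS E.η (Aconst QS a) P.Λ (ε • x) (u x) (v x) ≤
              (5 * cη + 2) * (Aconst QS a * v x ^ 2) :=
                hKeyV QS ha hcη hApos E P.Λ (ε • x) (u x) (v x) h
          _ = (5 * cη + 2) * Aconst QS a * v x ^ 2 := by ring
      · rw [min_eq_right h]; simp
    exact conclude s hs2 v (fun x => P.W (ε • x))
      (fun x => HpenV QS E.η (Aconst QS a) P.Λ (ε • x) (u x) (v x))
      ((5 * cη + 2) * Aconst QS a) (P.W P.x₀) P.h3.2.2.2 hK0 hKW hvmeas hvgag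
      hVφ' hφLp.integrable_sq (fun x => P.h3.2.1 (ε • x)) hH h0
end

section
/- Let α > 0 and R > 0, and let w : ℝ^N → ℝ be continuous with w(x) → 0 as |x| → ∞ and w > 0 on the closed ball of radius R centered at the origin. Assume that for every x ∈ ℝ^N with |x| > R the function ξ ↦ (2w(x) − w(x+ξ) − w(x−ξ))/|ξ|^{N+2s} is integrable on ℝ^N and ∫_{ℝ^N} (2w(x) − w(x+ξ) − w(x−ξ))/|ξ|^{N+2s} dξ + α w(x) ≥ 0. Then w(x) ≥ 0 for every x ∈ ℝ^N. -/
open MeasureTheory Real Set Filter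

/-- maximum-principle-type result for fractional supersolutions. -/
theorem stmt16 {N : ℕ} (s : ℝ) (hs : 0 < s ∧ s < 1) (hN : 2 * s < (N : ℝ))
    (α R : ℝ) (hα : 0 < α) (hR : 0 < R)
    (w : Euc N → ℝ) (hw : Continuous w)
    (hlim : Tendsto w (Filter.cocompact (Euc N)) (nhds (0 : ℝ)))
    (hpos : ∀ x ∈ Metric.closedBall (0 : Euc N) R, 0 < w x)
    (hsuper : ∀ x : Euc N, R < ‖x‖ →
      Integrable (fun ξ : Euc N =>
        (2 * w x - w (x + ξ) - w (x - ξ)) / ‖ξ‖ ^ ((N : ℝ) + 2 * s)) ∧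
      0 ≤ (∫ ξ : Euc N,
        (2 * w x - w (x + ξ) - w (x - ξ)) / ‖ξ‖ ^ ((N : ℝ) + 2 * s)) + α * w x) :
    ∀ x : Euc N, 0 ≤ w x := by
  by_contra h
  push_neg at h
  obtain ⟨z, hz⟩ := h
  -- w attains global minimum
  have hev : ∀ᶠ x in Filter.cocompact (Euc N), w z ≤ w x := by
    have := hlim.eventually (eventually_gt_nhds hz)
    exact this.mono fun y hy => le_of_lt hy
  obtain ⟨x₀, hmin⟩ := hw.exists_forall_le' z hev
  have hx₀neg : w x₀ < 0 := lt_of_le_of_lt (hmin z) hz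
  have hx₀R : R < ‖x₀‖ := by
    by_contra hle
    push_neg at hle
    have : x₀ ∈ Metric.closedBall (0 : Euc N) R := by
      simpa [Metric.mem_closedBall, dist_zero_right] using hle
    exact absurd (hpos x₀ this) (not_lt.mpr hx₀neg.le)
  obtain ⟨hint, hge⟩ := hsuper x₀ hx₀R
  have hIle : (∫ ξ : Euc N,
      (2 * w x₀ - w (x₀ + ξ) - w (x₀ - ξ)) / ‖ξ‖ ^ ((N : ℝ) + 2 * s)) ≤ 0 := by
    apply integral_nonpos
    intro ξ
    apply div_nonpos_of_nonpos_of_nonneg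
    · have h1 := hmin (x₀ + ξ)
      have h2 := hmin (x₀ - ξ)
      linarith
    · positivity
  have : α * w x₀ < 0 := mul_neg_of_pos_of_neg hα hx₀neg
  linarith
end
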